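/- arXiv:1512.01792 — 3 statements merged into one kernel-verified Lean document; each statement's English description precedes it below -/
import Mathlib

section
/- Let F₁ and F₂ be probability distributions on [0,∞) whose convolution F₁*F₂ belongs to the class L(γ) for some γ ≥ 0 (i.e., for all t, the tail satisfies (1-(F₁*F₂))(x-t) ~ e^{γt}(1-(F₁*F₂))(x) as x → ∞). Assume that for i = 1,2 and all t > 0, liminf_{x→∞} F̄ᵢ(x-t)/F̄ᵢ(x) ≥ e^{γt}. Then for i = 1,2 and all t > 0, |F̄ᵢ(x-t) - e^{γt} F̄ᵢ(x)| = o((1-(F₁*F₂))(x)) as x → ∞. -/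
open MeasureTheory Filter Set Asymptotics
open scoped ENNReal

/-- The tail `F̄(x) = μ((x,∞))` of a distribution `μ` on `ℝ`. -/
noncomputable def tail (μ : MeasureTheory.Measure ℝ) (x : ℝ) : ℝ := (μ (Set.Ioi x)).toReal

/-- Convolution of two distributions on `ℝ`. -/
noncomputable def mconv (μ ν : MeasureTheory.Measure ℝ) : MeasureTheory.Measure ℝ :=
  MeasureTheory.Measure.map (fun p : ℝ × ℝ => p.1 + p.2) (μ.prod ν)

/-- `iconv μ k` is the `k`-fold convolution `μ^{*k}` (with `μ^{*0} = δ₀`). -/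
noncomputable def iconv (μ : MeasureTheory.Measure ℝ) : ℕ → MeasureTheory.Measure ℝ
  | 0 => MeasureTheory.Measure.dirac 0
  | n + 1 => mconv (iconv μ n) μ

/-- The class `L(γ)`: `F̄(x-t) ~ e^{γt} F̄(x)` as `x → ∞`, for every `t`. -/
def MemL (γ : ℝ) (μ : MeasureTheory.Measure ℝ) : Prop :=
  ∀ t : ℝ, Filter.Tendsto (fun x => tail μ (x - t) / tail μ x) Filter.atTop
    (nhds (Real.exp (γ * t)))

/-- The class `OS`: `limsup_{x→∞} (F*F)̄(x) / F̄(x) < ∞`. -/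
def MemOS (μ : MeasureTheory.Measure ℝ) : Prop :=
  Filter.IsBoundedUnder (· ≤ ·) Filter.atTop (fun x => tail (mconv μ μ) x / tail μ x)

namespace StmtAux

/-- the upper half plane region -/
def up (z : ℝ) : Set (ℝ × ℝ) := {p | z < p.1 + p.2}

lemma measurableSet_up (z : ℝ) : MeasurableSet (up z) :=
  measurableSet_lt measurable_const (measurable_fst.add measurable_snd)

lemma tail_nonneg (μ : Measure ℝ) (x : ℝ) : 0 ≤ tail μ x := ENNReal.toReal_nonneg

lemma tail_anti (μ : Measure ℝ) [IsFiniteMeasure μ] : Antitone (tail μ) := fun a b hab =>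
  ENNReal.toReal_le_toReal (measure_ne_top _ _) (measure_ne_top _ _) |>.mpr
    (measure_mono (Set.Ioi_subset_Ioi hab))

lemma tail_le_one (μ : Measure ℝ) [IsProbabilityMeasure μ] (x : ℝ) : tail μ x ≤ 1 := by
  rw [tail, show (1:ℝ) = (1:ℝ≥0∞).toReal by simp]
  exact ENNReal.toReal_le_toReal (measure_ne_top _ _) (by simp) |>.mpr prob_le_one

variable {F G : Measure ℝ} [IsProbabilityMeasure F] [IsProbabilityMeasure G]

lemma mconv_Ioi (z : ℝ) : (mconv F G) (Set.Ioi z) = (F.prod G) (up z) := by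
  rw [mconv, Measure.map_apply (by fun_prop) measurableSet_Ioi]
  rfl

lemma tail_mconv (z : ℝ) : tail (mconv F G) z = ((F.prod G) (up z)).toReal := by
  rw [tail, mconv_Ioi]

lemma mconv_comm : mconv F G = mconv G F := by
  rw [mconv, mconv, ← Measure.prod_swap,
    Measure.map_map (by fun_prop) measurable_swap]
  congr 1
  ext p
  exact add_comm _ _

lemma slice_v (S : Set ℝ) (hS : MeasurableSet S) (z : ℝ) :
    (F.prod G) (up z ∩ {p | p.2 ∈ S}) = ∫⁻ v in S, F (Set.Ioi (z - v)) ∂G := by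
  rw [Measure.prod_apply_symm (show MeasurableSet (up z ∩ {p | p.2 ∈ S}) from
      (measurableSet_up z).inter (measurable_snd hS)),
    ← lintegral_indicator hS]
  congr 1
  ext v
  by_cases hv : v ∈ S
  · rw [Set.indicator_of_mem hv]
    congr 1
    ext u
    simp only [Set.mem_preimage, Set.mem_inter_iff, up, Set.mem_setOf_eq, Set.mem_Ioi]
    constructor
    · rintro ⟨h1, _⟩; linarith
    · intro h; exact ⟨by linarith, hv⟩
  · rw [Set.indicator_of_notMem hv]
    have : ((fun u => (u, v)) ⁻¹' (up z ∩ {p | p.2 ∈ S})) = ∅ := by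
      ext u
      simp only [Set.mem_preimage, Set.mem_inter_iff, Set.mem_setOf_eq,
        Set.mem_empty_iff_false, iff_false]
      rintro ⟨_, h2⟩; exact hv h2
    rw [this, measure_empty]

lemma slice_v_univ (z : ℝ) :
    (F.prod G) (up z) = ∫⁻ v, F (Set.Ioi (z - v)) ∂G := by
  have := slice_v (F := F) (G := G) Set.univ MeasurableSet.univ z
  simpa using this

lemma slice_u (S : Set ℝ) (hS : MeasurableSet S) (z : ℝ) :
    (F.prod G) (up z ∩ {p | p.1 ∈ S}) = ∫⁻ u in S, G (Set.Ioi (z - u)) ∂F := by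
  rw [Measure.prod_apply (show MeasurableSet (up z ∩ {p | p.1 ∈ S}) from
      (measurableSet_up z).inter (measurable_fst hS)),
    ← lintegral_indicator hS]
  congr 1
  ext u
  by_cases hu : u ∈ S
  · rw [Set.indicator_of_mem hu]
    congr 1
    ext v
    simp only [Set.mem_preimage, Set.mem_inter_iff, up, Set.mem_setOf_eq, Set.mem_Ioi]
    constructor
    · rintro ⟨h1, _⟩; linarith
    · intro h; exact ⟨by linarith, hu⟩
  · rw [Set.indicator_of_notMem hu]
    have : (Prod.mk u ⁻¹' (up z ∩ {p | p.1 ∈ S})) = ∅ := by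
      ext v
      simp only [Set.mem_preimage, Set.mem_inter_iff, Set.mem_setOf_eq,
        Set.mem_empty_iff_false, iff_false]
      rintro ⟨_, h2⟩; exact hu h2
    rw [this, measure_empty]

lemma slice_u_univ (z : ℝ) :
    (F.prod G) (up z) = ∫⁻ u, G (Set.Ioi (z - u)) ∂F := by
  have := slice_u (F := F) (G := G) Set.univ MeasurableSet.univ z
  simpa using this

lemma slice_u_top (S : Set ℝ) (hS : MeasurableSet S) (c z : ℝ) (hcz : ∀ u ∈ S, c ≤ z - u) :
    (F.prod G) (up z ∩ {p | p.2 ∈ Set.Ioi c} ∩ {p | p.1 ∈ S}) = ∫⁻ u in S, G (Set.Ioi (z - u)) ∂F := by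
  rw [Measure.prod_apply (show MeasurableSet (up z ∩ {p | p.2 ∈ Set.Ioi c} ∩ {p | p.1 ∈ S}) from
      ((measurableSet_up z).inter (measurable_snd measurableSet_Ioi)).inter
        (measurable_fst hS)),
    ← lintegral_indicator hS]
  congr 1
  ext u
  by_cases hu : u ∈ S
  · rw [Set.indicator_of_mem hu]
    congr 1
    ext v
    simp only [Set.mem_preimage, Set.mem_inter_iff, up, Set.mem_setOf_eq, Set.mem_Ioi]
    constructor
    · rintro ⟨⟨h1, _⟩, _⟩; linarith
    · intro h
      have := hcz u hu
      exact ⟨⟨by linarith, by linarith⟩, hu⟩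
  · rw [Set.indicator_of_notMem hu]
    have : (Prod.mk u ⁻¹' (up z ∩ {p | p.2 ∈ Set.Ioi c} ∩ {p | p.1 ∈ S})) = ∅ := by
      ext v
      simp only [Set.mem_preimage, Set.mem_inter_iff, Set.mem_setOf_eq,
        Set.mem_empty_iff_false, iff_false]
      rintro ⟨_, h2⟩; exact hu h2
    rw [this, measure_empty]

end StmtAux

namespace StmtAux

instance mconv_prob (μ ν : Measure ℝ) [IsProbabilityMeasure μ] [IsProbabilityMeasure ν] :
    IsProbabilityMeasure (mconv μ ν) := by
  rw [mconv]
  exact Measure.isProbabilityMeasure_map (by fun_prop)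

section Consequences

variable {F G : Measure ℝ} [IsProbabilityMeasure F] [IsProbabilityMeasure G] {γ : ℝ}

lemma tail_pos_of_hlim (μ : Measure ℝ) [IsFiniteMeasure μ]
    (hlim : ∀ t > (0:ℝ),
      Real.exp (γ*t) ≤ Filter.liminf (fun x => tail μ (x-t) / tail μ x) atTop) (x : ℝ) :
    0 < tail μ x := by
  by_contra h
  push_neg at h
  have hx0 : tail μ x = 0 := le_antisymm h (tail_nonneg μ x)
  have hev : ∀ᶠ z in atTop, tail μ (z-1) / tail μ z = 0 := by
    filter_upwards [eventually_ge_atTop (x+1)] with z hz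
    have h1 : tail μ (z-1) = 0 :=
      le_antisymm (hx0 ▸ tail_anti μ (by linarith : x ≤ z - 1)) (tail_nonneg _ _)
    simp [h1]
  have hplain : Filter.liminf (fun z => tail μ (z-1) / tail μ z) atTop = 0 := by
    rw [Filter.liminf_congr hev, Filter.liminf_const]
  have h2 := hlim 1 one_pos
  rw [hplain] at h2
  exact absurd h2 (not_le.mpr (Real.exp_pos _))

lemma tail_pos_of_memL (μ : Measure ℝ) [IsFiniteMeasure μ]
    (hL : MemL γ μ) (x : ℝ) : 0 < tail μ x := by
  by_contra h
  push_neg at h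
  have hx0 : tail μ x = 0 := le_antisymm h (tail_nonneg μ x)
  have hev : ∀ᶠ z in atTop, tail μ (z-1) / tail μ z = 0 := by
    filter_upwards [eventually_ge_atTop (x+1)] with z hz
    have h1 : tail μ (z-1) = 0 :=
      le_antisymm (hx0 ▸ tail_anti μ (by linarith : x ≤ z - 1)) (tail_nonneg _ _)
    simp [h1]
  have h0 : Filter.Tendsto (fun z => tail μ (z-1) / tail μ z) atTop (nhds 0) :=
    Tendsto.congr' (hev.mono fun z hz => hz.symm) tendsto_const_nhds
  have := tendsto_nhds_unique (hL 1) h0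
  exact absurd this (ne_of_gt (Real.exp_pos _))

lemma eventually_ratio {μ : Measure ℝ} [IsFiniteMeasure μ] {t : ℝ}
    (hlim : Real.exp (γ*t) ≤ Filter.liminf (fun x => tail μ (x-t) / tail μ x) atTop)
    (hpos : ∀ x, 0 < tail μ x) {ε : ℝ} (hε : 0 < ε) :
    ∀ᶠ z in atTop, Real.exp (γ*t) * tail μ z ≤ tail μ (z-t) + ε * tail μ z := by
  rw [Filter.liminf_eq] at hlim
  have hset : (0:ℝ) ∈ {a | ∀ᶠ z in atTop, a ≤ tail μ (z-t) / tail μ z} := by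
    filter_upwards with z
    have := tail_nonneg μ (z-t); have := (hpos z).le
    positivity
  obtain ⟨a, ha, hlt⟩ := exists_lt_of_lt_csSup ⟨0, hset⟩
    (lt_of_lt_of_le (by linarith : Real.exp (γ*t) - ε < Real.exp (γ*t)) hlim)
  filter_upwards [ha] with z hz
  have h3 : (Real.exp (γ*t) - ε) * tail μ z ≤ tail μ (z-t) := by
    rw [← le_div_iff₀ (hpos z)]
    linarith
  linarith

lemma hH_bounds (hL : MemL γ (mconv F G)) (s : ℝ) {ε : ℝ} (hε : 0 < ε) :
    ∀ᶠ x in atTop,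
      tail (mconv F G) (x - s) ≤ (Real.exp (γ*s) + ε) * tail (mconv F G) x ∧
      tail (mconv F G) (x - s) - Real.exp (γ*s) * tail (mconv F G) x
        ≤ ε * tail (mconv F G) x := by
  have hpos := tail_pos_of_memL (mconv F G) hL
  have h2 := (Metric.tendsto_nhds.mp (hL s)) ε hε
  filter_upwards [h2] with x hx
  rw [Real.dist_eq, abs_lt] at hx
  have h3 : tail (mconv F G) (x - s) / tail (mconv F G) x < Real.exp (γ*s) + ε := by
    linarith [hx.2]
  have h4 : tail (mconv F G) (x - s) < (Real.exp (γ*s) + ε) * tail (mconv F G) x :=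
    (div_lt_iff₀ (hpos x)).mp h3
  exact ⟨h4.le, by linarith⟩

lemma exists_interval (hsG : G (Set.Iio 0) = 0) {w : ℝ} (hw : 0 < w) :
    ∃ a : ℝ, 0 ≤ a ∧ 0 < (G (Set.Icc a (a+w))).toReal := by
  by_contra h
  push_neg at h
  have hz : ∀ n : ℕ, G (Set.Icc ((n:ℝ)*w) ((n:ℝ)*w + w)) = 0 := by
    intro n
    have h1 := h ((n:ℝ)*w) (by positivity)
    have h2 : (G (Set.Icc ((n:ℝ)*w) ((n:ℝ)*w + w))).toReal = 0 :=
      le_antisymm h1 ENNReal.toReal_nonneg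
    rcases (ENNReal.toReal_eq_zero_iff _).mp h2 with h3 | h3
    · exact h3
    · exact absurd h3 (measure_ne_top _ _)
  have hcover : Set.Ici (0:ℝ) ⊆ ⋃ n : ℕ, Set.Icc ((n:ℝ)*w) ((n:ℝ)*w + w) := by
    intro y hy
    have hy0 : (0:ℝ) ≤ y := hy
    refine Set.mem_iUnion.mpr ⟨⌊y/w⌋₊, ?_, ?_⟩
    · calc ((⌊y/w⌋₊ : ℝ)) * w ≤ (y/w) * w :=
            mul_le_mul_of_nonneg_right (Nat.floor_le (by positivity)) hw.le
        _ = y := by field_simp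
    · have := Nat.lt_floor_add_one (y/w)
      have h5 : y / w < (⌊y/w⌋₊ : ℝ) + 1 := by exact_mod_cast this
      have h6 : y < ((⌊y/w⌋₊ : ℝ) + 1) * w := by
        rw [← div_lt_iff₀ hw] at *; linarith
      linarith [h6]
  have hIci : G (Set.Ici (0:ℝ)) = 0 :=
    measure_mono_null hcover (measure_iUnion_null hz)
  have huniv : (1:ℝ≥0∞) ≤ G (Set.Iio 0) + G (Set.Ici 0) := by
    rw [show (1:ℝ≥0∞) = G Set.univ from measure_univ.symm,
      show (Set.univ : Set ℝ) = Set.Iio 0 ∪ Set.Ici 0 from (Set.Iio_union_Ici).symm]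
    exact measure_union_le _ _
  rw [hsG, hIci] at huniv
  simp at huniv

end Consequences
end StmtAux

namespace StmtAux

section Engine

variable {F G : Measure ℝ} [IsProbabilityMeasure F] [IsProbabilityMeasure G]

lemma meas_tailE (μ : Measure ℝ) : Measurable (fun y : ℝ => μ (Set.Ioi y)) :=
  Antitone.measurable (fun _ _ h => measure_mono (Set.Ioi_subset_Ioi h))

lemma tailE_eq (μ : Measure ℝ) [IsFiniteMeasure μ] (y : ℝ) :
    μ (Set.Ioi y) = ENNReal.ofReal (tail μ y) :=
  (ENNReal.ofReal_toReal (measure_ne_top _ _)).symm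

lemma pr_ne_top (s : Set (ℝ × ℝ)) : (F.prod G) s ≠ ⊤ := measure_ne_top _ _

lemma pr_mono {s s' : Set (ℝ × ℝ)} (h : s ⊆ s') :
    ((F.prod G) s).toReal ≤ ((F.prod G) s').toReal :=
  (ENNReal.toReal_le_toReal (pr_ne_top _) (pr_ne_top _)).mpr (measure_mono h)

lemma pr_rect (A B : Set ℝ) :
    ((F.prod G) (A ×ˢ B)).toReal = (F A).toReal * (G B).toReal := by
  rw [Measure.prod_prod, ENNReal.toReal_mul]

lemma bulk_bound {t x : ℝ} {e ε : ℝ} (he : 0 ≤ e) (hε : 0 ≤ ε)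
    (S : Set ℝ) (hS : MeasurableSet S)
    (hpt : ∀ v ∈ S, e * tail F (x - v) ≤ tail F (x - t - v) + ε * tail F (x - v)) :
    e * ((F.prod G) (up x ∩ {p | p.2 ∈ S})).toReal ≤
      ((F.prod G) (up (x - t) ∩ {p | p.2 ∈ S})).toReal +
        ε * ((F.prod G) (up x)).toReal := by
  have hm1 : Measurable fun v : ℝ => F (Set.Ioi (x - t - v)) :=
    (meas_tailE F).comp (measurable_const.sub measurable_id)
  have hm2 : Measurable fun v : ℝ => F (Set.Ioi (x - v)) :=
    (meas_tailE F).comp (measurable_const.sub measurable_id)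
  have key : ENNReal.ofReal e * (F.prod G) (up x ∩ {p | p.2 ∈ S}) ≤
      (F.prod G) (up (x - t) ∩ {p | p.2 ∈ S}) +
        ENNReal.ofReal ε * (F.prod G) (up x) := by
    rw [slice_v S hS x, slice_v S hS (x - t), ← lintegral_const_mul _ hm2]
    calc ∫⁻ v in S, ENNReal.ofReal e * F (Set.Ioi (x - v)) ∂G
        ≤ ∫⁻ v in S, (F (Set.Ioi (x - t - v)) + ENNReal.ofReal ε * F (Set.Ioi (x - v))) ∂G := by
          refine setLIntegral_mono (hm1.add (measurable_const.mul hm2)) (fun v hv => ?_)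
          rw [tailE_eq F (x - v), tailE_eq F (x - t - v),
            ← ENNReal.ofReal_mul he, ← ENNReal.ofReal_mul hε, ← ENNReal.ofReal_add
              (tail_nonneg _ _) (mul_nonneg hε (tail_nonneg _ _))]
          exact ENNReal.ofReal_le_ofReal (hpt v hv)
      _ = (∫⁻ v in S, F (Set.Ioi (x - t - v)) ∂G) +
            ENNReal.ofReal ε * ∫⁻ v in S, F (Set.Ioi (x - v)) ∂G := by
          rw [lintegral_add_left hm1, lintegral_const_mul _ hm2]
      _ ≤ (∫⁻ v in S, F (Set.Ioi (x - t - v)) ∂G) +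
            ENNReal.ofReal ε * (F.prod G) (up x) := by
          gcongr
          rw [slice_v_univ x]
          exact setLIntegral_le_lintegral _ _
  have hne : (F.prod G) (up (x - t) ∩ {p | p.2 ∈ S}) +
      ENNReal.ofReal ε * (F.prod G) (up x) ≠ ⊤ :=
    ENNReal.add_ne_top.mpr ⟨pr_ne_top _, ENNReal.mul_ne_top ENNReal.ofReal_ne_top (pr_ne_top _)⟩
  have := (ENNReal.toReal_le_toReal (by
      exact ENNReal.mul_ne_top ENNReal.ofReal_ne_top (pr_ne_top _)) hne).mpr key
  rwa [ENNReal.toReal_mul, ENNReal.toReal_add (pr_ne_top _)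
      (ENNReal.mul_ne_top ENNReal.ofReal_ne_top (pr_ne_top _)), ENNReal.toReal_mul,
    ENNReal.toReal_ofReal he, ENNReal.toReal_ofReal hε] at this

lemma top_bound {t x c : ℝ} {e ε : ℝ} (he : 0 ≤ e) (hε : 0 ≤ ε)
    (S : Set ℝ) (hS : MeasurableSet S)
    (hc1 : ∀ u ∈ S, c ≤ x - t - u) (hc2 : ∀ u ∈ S, c ≤ x - u)
    (hpt : ∀ u ∈ S, e * tail G (x - u) ≤ tail G (x - t - u) + ε * tail G (x - u)) :
    e * ((F.prod G) (up x ∩ {p | p.2 ∈ Set.Ioi c} ∩ {p | p.1 ∈ S})).toReal ≤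
      ((F.prod G) (up (x - t) ∩ {p | p.2 ∈ Set.Ioi c} ∩ {p | p.1 ∈ S})).toReal +
        ε * ((F.prod G) (up x)).toReal := by
  have hm1 : Measurable fun u : ℝ => G (Set.Ioi (x - t - u)) :=
    (meas_tailE G).comp (measurable_const.sub measurable_id)
  have hm2 : Measurable fun u : ℝ => G (Set.Ioi (x - u)) :=
    (meas_tailE G).comp (measurable_const.sub measurable_id)
  have key : ENNReal.ofReal e *
      (F.prod G) (up x ∩ {p | p.2 ∈ Set.Ioi c} ∩ {p | p.1 ∈ S}) ≤
      (F.prod G) (up (x - t) ∩ {p | p.2 ∈ Set.Ioi c} ∩ {p | p.1 ∈ S}) +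
        ENNReal.ofReal ε * (F.prod G) (up x) := by
    rw [slice_u_top S hS c x hc2, slice_u_top S hS c (x - t) hc1,
      ← lintegral_const_mul _ hm2]
    calc ∫⁻ u in S, ENNReal.ofReal e * G (Set.Ioi (x - u)) ∂F
        ≤ ∫⁻ u in S, (G (Set.Ioi (x - t - u)) + ENNReal.ofReal ε * G (Set.Ioi (x - u))) ∂F := by
          refine setLIntegral_mono (hm1.add (measurable_const.mul hm2)) (fun u hu => ?_)
          rw [tailE_eq G (x - u), tailE_eq G (x - t - u),
            ← ENNReal.ofReal_mul he, ← ENNReal.ofReal_mul hε, ← ENNReal.ofReal_add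
              (tail_nonneg _ _) (mul_nonneg hε (tail_nonneg _ _))]
          exact ENNReal.ofReal_le_ofReal (hpt u hu)
      _ = (∫⁻ u in S, G (Set.Ioi (x - t - u)) ∂F) +
            ENNReal.ofReal ε * ∫⁻ u in S, G (Set.Ioi (x - u)) ∂F := by
          rw [lintegral_add_left hm1, lintegral_const_mul _ hm2]
      _ ≤ (∫⁻ u in S, G (Set.Ioi (x - t - u)) ∂F) +
            ENNReal.ofReal ε * (F.prod G) (up x) := by
          gcongr
          rw [slice_u_univ x]
          exact setLIntegral_le_lintegral _ _
  have hne : (F.prod G) (up (x - t) ∩ {p | p.2 ∈ Set.Ioi c} ∩ {p | p.1 ∈ S}) +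
      ENNReal.ofReal ε * (F.prod G) (up x) ≠ ⊤ :=
    ENNReal.add_ne_top.mpr ⟨pr_ne_top _, ENNReal.mul_ne_top ENNReal.ofReal_ne_top (pr_ne_top _)⟩
  have := (ENNReal.toReal_le_toReal (by
      exact ENNReal.mul_ne_top ENNReal.ofReal_ne_top (pr_ne_top _)) hne).mpr key
  rwa [ENNReal.toReal_mul, ENNReal.toReal_add (pr_ne_top _)
      (ENNReal.mul_ne_top ENNReal.ofReal_ne_top (pr_ne_top _)), ENNReal.toReal_mul,
    ENNReal.toReal_ofReal he, ENNReal.toReal_ofReal hε] at this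

end Engine
end StmtAux

namespace StmtAux

section Master

variable {F G : Measure ℝ} [IsProbabilityMeasure F] [IsProbabilityMeasure G] {γ : ℝ}

lemma tail_def (μ : Measure ℝ) (y : ℝ) : tail μ y = (μ (Set.Ioi y)).toReal := rfl

lemma master (hγ : 0 ≤ γ) {t w a ε T X₀ : ℝ} {K : ℕ}
    (hw : 0 < w) (hwt : w < t) (ha : 0 ≤ a) (hε : 0 < ε) (hT : 0 ≤ T) (hK : 1 ≤ K)
    (hXF : ∀ z, X₀ ≤ z → Real.exp (γ*t) * tail F z ≤ tail F (z-t) + ε * tail F z)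
    (hXG : ∀ z, X₀ ≤ z → Real.exp (γ*t) * tail G z ≤ tail G (z-t) + ε * tail G z) :
    ∀ᶠ x in atTop,
      (G (Set.Icc a (a+w))).toReal * (tail F (x-a-t) - Real.exp (γ*t) * tail F (x-a-w)) ≤
        (tail (mconv F G) (x-t) - Real.exp (γ*t) * tail (mconv F G) x)
          + 2*ε * tail (mconv F G) x
          + (Real.exp (γ*t) - 1) *
              (2 * (tail (mconv F G) (x-t) / K) + tail (mconv F G) (x+T)) := by
  have ht : 0 < t := hw.trans hwt
  have he0 : (0:ℝ) ≤ Real.exp (γ*t) := (Real.exp_pos _).le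
  have he1 : (1:ℝ) ≤ Real.exp (γ*t) := Real.one_le_exp (mul_nonneg hγ ht.le)
  filter_upwards [eventually_ge_atTop (X₀ + (K:ℝ)*(T+t+1) + (a+w+t+T+1) + max X₀ 0)]
    with x hx
  -- the windows
  have hrect_sub : ∀ k : ℕ,
      (Set.Icc (X₀ + ((k:ℝ)+1)*(T+t+1) - t) (X₀ + ((k:ℝ)+1)*(T+t+1) + T)) ×ˢ
        (Set.Ioi (x - (X₀ + ((k:ℝ)+1)*(T+t+1)))) ⊆ up (x - t) := by
    rintro k ⟨u, v⟩ ⟨hu, hv⟩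
    simp only [Set.mem_Icc] at hu
    simp only [Set.mem_Ioi] at hv
    simp only [up, Set.mem_setOf_eq]
    linarith [hu.1]
  -- pigeonhole
  obtain ⟨k, hkK, hmG⟩ : ∃ k, k < K ∧
      (F (Set.Icc (X₀ + ((k:ℝ)+1)*(T+t+1) - t) (X₀ + ((k:ℝ)+1)*(T+t+1) + T))).toReal *
        (G (Set.Ioi (x - (X₀ + ((k:ℝ)+1)*(T+t+1))))).toReal
      ≤ tail (mconv F G) (x-t) / K := by
    set f : ℕ → ℝ≥0∞ := fun k =>
      (F.prod G) ((Set.Icc (X₀ + ((k:ℝ)+1)*(T+t+1) - t) (X₀ + ((k:ℝ)+1)*(T+t+1) + T)) ×ˢ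
        (Set.Ioi (x - (X₀ + ((k:ℝ)+1)*(T+t+1))))) with hf_def
    have hgap : ∀ i j : ℕ, i < j → Disjoint
        ((Set.Icc (X₀ + ((i:ℝ)+1)*(T+t+1) - t) (X₀ + ((i:ℝ)+1)*(T+t+1) + T)) ×ˢ
          (Set.Ioi (x - (X₀ + ((i:ℝ)+1)*(T+t+1)))))
        ((Set.Icc (X₀ + ((j:ℝ)+1)*(T+t+1) - t) (X₀ + ((j:ℝ)+1)*(T+t+1) + T)) ×ˢ
          (Set.Ioi (x - (X₀ + ((j:ℝ)+1)*(T+t+1))))) := by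
      intro i j hlt
      refine Set.disjoint_left.mpr ?_
      rintro ⟨u, v⟩ ⟨hu, _⟩ ⟨hu', _⟩
      simp only [Set.mem_Icc] at hu hu'
      have hij' : (i:ℝ) + 1 + 1 ≤ (j:ℝ) + 1 := by
        have : (i:ℝ) + 1 ≤ (j:ℝ) := by exact_mod_cast hlt
        linarith
      have hmul := mul_le_mul_of_nonneg_right hij' (by linarith : (0:ℝ) ≤ T+t+1)
      linarith [hu.2, hu'.1]
    have hdisj : (↑(Finset.range K) : Set ℕ).PairwiseDisjoint (fun k =>
        (Set.Icc (X₀ + ((k:ℝ)+1)*(T+t+1) - t) (X₀ + ((k:ℝ)+1)*(T+t+1) + T)) ×ˢ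
        (Set.Ioi (x - (X₀ + ((k:ℝ)+1)*(T+t+1))))) := by
      intro i _ j _ hij
      rcases hij.lt_or_gt with h | h
      · exact hgap i j h
      · exact (hgap j i h).symm
    have hsumE : ∑ k ∈ Finset.range K, f k ≤ (F.prod G) (up (x - t)) := by
      rw [hf_def, ← measure_biUnion_finset hdisj (fun k _ =>
        (measurableSet_Icc.prod measurableSet_Ioi))]
      exact measure_mono (Set.iUnion₂_subset fun k _ => hrect_sub k)
    have hsumR : ∑ k ∈ Finset.range K,
        ((F (Set.Icc (X₀ + ((k:ℝ)+1)*(T+t+1) - t) (X₀ + ((k:ℝ)+1)*(T+t+1) + T))).toReal *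
          (G (Set.Ioi (x - (X₀ + ((k:ℝ)+1)*(T+t+1))))).toReal)
        ≤ tail (mconv F G) (x-t) := by
      rw [tail_mconv]
      have h1 : ∀ k ∈ Finset.range K,
          (F (Set.Icc (X₀ + ((k:ℝ)+1)*(T+t+1) - t) (X₀ + ((k:ℝ)+1)*(T+t+1) + T))).toReal *
            (G (Set.Ioi (x - (X₀ + ((k:ℝ)+1)*(T+t+1))))).toReal = (f k).toReal := by
        intro k _
        rw [hf_def, pr_rect]
      rw [Finset.sum_congr rfl h1, ← ENNReal.toReal_sum (fun k _ => pr_ne_top _)]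
      exact (ENNReal.toReal_le_toReal (by
        exact (lt_of_le_of_lt hsumE (measure_lt_top _ _)).ne) (pr_ne_top _)).mpr hsumE
    have hKpos : (0:ℝ) < (K:ℝ) := by exact_mod_cast hK
    have hconst : ∑ _k ∈ Finset.range K, (tail (mconv F G) (x-t) / K)
        = tail (mconv F G) (x-t) := by
      rw [Finset.sum_const, Finset.card_range, nsmul_eq_mul]
      field_simp
    obtain ⟨k, hk, hle⟩ := Finset.exists_le_of_sum_le
      (Finset.nonempty_range_iff.mpr (by omega)) (hsumR.trans_eq hconst.symm)
    exact ⟨k, Finset.mem_range.mp hk, hle⟩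
  -- the chosen window
  set X : ℝ := X₀ + ((k:ℝ)+1)*(T+t+1) with hX_def
  have hkK' : (k:ℝ) + 1 ≤ (K:ℝ) := by exact_mod_cast hkK
  have hXle : X ≤ X₀ + (K:ℝ)*(T+t+1) := by
    rw [hX_def]
    have := mul_le_mul_of_nonneg_right hkK' (by linarith : (0:ℝ) ≤ T+t+1)
    linarith
  have hXge : X₀ + (T+t+1) ≤ X := by
    rw [hX_def]
    have h1 : (1:ℝ) ≤ (k:ℝ)+1 := by
      have := Nat.cast_nonneg (α := ℝ) k
      linarith
    have := mul_le_mul_of_nonneg_right h1 (by linarith : (0:ℝ) ≤ T+t+1)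
    linarith
  have hmax0 := le_max_right X₀ 0
  have hmaxX := le_max_left X₀ 0
  have hca : a + w ≤ x - X := by linarith
  have hcX : X₀ ≤ x - X := by linarith
  have hXt : X₀ ≤ X - t := by linarith
  -- partition of the plane according to the second coordinate
  have hpart : ∀ z : ℝ, ((F.prod G) (up z)).toReal =
      ((F.prod G) (up z ∩ {p | p.2 ∈ Set.Icc a (a+w)})).toReal +
      ((F.prod G) (up z ∩ {p | p.2 ∈ Set.Iic (x - X) \ Set.Icc a (a+w)})).toReal +
      ((F.prod G) (up z ∩ {p | p.2 ∈ Set.Ioi (x - X)})).toReal := by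
    intro z
    have hun : up z = (up z ∩ {p | p.2 ∈ Set.Icc a (a+w)}) ∪
        ((up z ∩ {p | p.2 ∈ Set.Iic (x - X) \ Set.Icc a (a+w)}) ∪
         (up z ∩ {p | p.2 ∈ Set.Ioi (x - X)})) := by
      ext p
      simp only [Set.mem_union, Set.mem_inter_iff, Set.mem_setOf_eq, Set.mem_Icc,
        Set.mem_Iic, Set.mem_diff, Set.mem_Ioi]
      constructor
      · intro hp
        by_cases h1 : a ≤ p.2 ∧ p.2 ≤ a + w
        · exact Or.inl ⟨hp, h1⟩
        · rcases le_or_gt p.2 (x - X) with h2 | h2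
          · exact Or.inr (Or.inl ⟨hp, ⟨h2, h1⟩⟩)
          · exact Or.inr (Or.inr ⟨hp, h2⟩)
      · rintro (h | h | h) <;> exact h.1
    have hd23 : Disjoint (up z ∩ {p | p.2 ∈ Set.Iic (x - X) \ Set.Icc a (a+w)})
        (up z ∩ {p | p.2 ∈ Set.Ioi (x - X)}) := by
      refine Set.disjoint_left.mpr ?_
      rintro p ⟨_, h1⟩ ⟨_, h2⟩
      simp only [Set.mem_setOf_eq, Set.mem_diff, Set.mem_Iic] at h1
      simp only [Set.mem_setOf_eq, Set.mem_Ioi] at h2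
      linarith [h1.1]
    have hd123 : Disjoint (up z ∩ {p | p.2 ∈ Set.Icc a (a+w)})
        ((up z ∩ {p | p.2 ∈ Set.Iic (x - X) \ Set.Icc a (a+w)}) ∪
         (up z ∩ {p | p.2 ∈ Set.Ioi (x - X)})) := by
      refine Set.disjoint_left.mpr ?_
      rintro p ⟨_, h1⟩ (⟨_, h2⟩ | ⟨_, h2⟩)
      · simp only [Set.mem_setOf_eq] at h1 h2
        exact h2.2 h1
      · simp only [Set.mem_setOf_eq, Set.mem_Icc] at h1
        simp only [Set.mem_setOf_eq, Set.mem_Ioi] at h2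
        linarith [h1.2]
    have hm2 : MeasurableSet (up z ∩ {p | p.2 ∈ Set.Iic (x - X) \ Set.Icc a (a+w)}) :=
      (measurableSet_up z).inter (measurable_snd (measurableSet_Iic.diff measurableSet_Icc))
    have hm3 : MeasurableSet (up z ∩ {p | p.2 ∈ Set.Ioi (x - X)}) :=
      (measurableSet_up z).inter (measurable_snd measurableSet_Ioi)
    have e1 := congrArg (F.prod G) hun
    rw [measure_union hd123 (hm2.union hm3), measure_union hd23 hm3] at e1
    rw [e1, ENNReal.toReal_add (pr_ne_top _) (by
        exact ENNReal.add_ne_top.mpr ⟨pr_ne_top _, pr_ne_top _⟩),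
      ENNReal.toReal_add (pr_ne_top _) (pr_ne_top _)]
    ring
  -- capture bounds
  have hcap1 : (G (Set.Icc a (a+w))).toReal * tail F (x-a-t) ≤
      ((F.prod G) (up (x - t) ∩ {p | p.2 ∈ Set.Icc a (a+w)})).toReal := by
    have hsub : (Set.Ioi (x-a-t)) ×ˢ (Set.Icc a (a+w)) ⊆
        up (x - t) ∩ {p | p.2 ∈ Set.Icc a (a+w)} := by
      rintro ⟨u, v⟩ ⟨hu, hv⟩
      simp only [Set.mem_Ioi] at hu
      simp only [Set.mem_Icc] at hv
      refine ⟨?_, hv⟩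
      show x - t < u + v
      linarith [hv.1]
    have h2 := pr_mono (F := F) (G := G) hsub
    rw [pr_rect] at h2
    rw [tail_def, mul_comm]
    exact h2
  have hcap2 : ((F.prod G) (up x ∩ {p | p.2 ∈ Set.Icc a (a+w)})).toReal ≤
      (G (Set.Icc a (a+w))).toReal * tail F (x-a-w) := by
    have hsub : up x ∩ {p | p.2 ∈ Set.Icc a (a+w)} ⊆
        (Set.Ioi (x-a-w)) ×ˢ (Set.Icc a (a+w)) := by
      rintro ⟨u, v⟩ ⟨hu, hv⟩
      simp only [up, Set.mem_setOf_eq] at hu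
      simp only [Set.mem_setOf_eq, Set.mem_Icc] at hv
      refine ⟨Set.mem_Ioi.mpr ?_, hv⟩
      linarith [hv.2]
    have h2 := pr_mono (F := F) (G := G) hsub
    rw [pr_rect] at h2
    rw [tail_def, mul_comm]
    exact h2
  -- bulk bound
  have hbulk := bulk_bound (F := F) (G := G) (t := t) (x := x) he0 hε.le
      (Set.Iic (x - X) \ Set.Icc a (a+w)) (measurableSet_Iic.diff measurableSet_Icc)
      (fun v hv => by
        have h1 : X₀ ≤ x - v := by
          simp only [Set.mem_diff, Set.mem_Iic] at hv
          linarith [hv.1, hXge]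
        have h2 := hXF (x - v) h1
        rw [show x - v - t = x - t - v from by ring] at h2
        exact h2)
  -- top main bound
  have htopm := top_bound (F := F) (G := G) (t := t) (x := x) (c := x - X) he0 hε.le
      (Set.Iio (X - t)) measurableSet_Iio
      (fun u hu => by
        simp only [Set.mem_Iio] at hu
        linarith)
      (fun u hu => by
        simp only [Set.mem_Iio] at hu
        linarith)
      (fun u hu => by
        simp only [Set.mem_Iio] at hu
        have h1 : X₀ ≤ x - u := by linarith
        have h2 := hXG (x - u) h1
        rw [show x - u - t = x - t - u from by ring] at h2
        exact h2)
  -- decomposition of the top region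
  have hIci_split : (F (Set.Ici (X - t))).toReal
      = (F (Set.Ico (X - t) X)).toReal + (F (Set.Ici X)).toReal := by
    rw [← Set.Ico_union_Ici_eq_Ici (by linarith : X - t ≤ X),
      measure_union (by
        refine Set.disjoint_left.mpr ?_
        intro u h1 h2
        simp only [Set.mem_Ico] at h1
        simp only [Set.mem_Ici] at h2
        linarith [h1.2]) measurableSet_Ici,
      ENNReal.toReal_add (measure_ne_top _ _) (measure_ne_top _ _)]
  have hD1 : ((F.prod G) (up (x - t) ∩ {p | p.2 ∈ Set.Ioi (x - X)} ∩
        {p | p.1 ∈ Set.Iio (X - t)})).toReal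
      + (F (Set.Ici (X - t))).toReal * (G (Set.Ioi (x - X))).toReal
      ≤ ((F.prod G) (up (x - t) ∩ {p | p.2 ∈ Set.Ioi (x - X)})).toReal := by
    have hsub : (up (x - t) ∩ {p | p.2 ∈ Set.Ioi (x - X)} ∩ {p | p.1 ∈ Set.Iio (X - t)}) ∪
        (Set.Ici (X - t) ×ˢ Set.Ioi (x - X)) ⊆
          up (x - t) ∩ {p | p.2 ∈ Set.Ioi (x - X)} := by
      rintro p (⟨h1, _⟩ | ⟨h1, h2⟩)
      · exact h1
      · simp only [Set.mem_Ici] at h1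
        simp only [Set.mem_Ioi] at h2
        exact ⟨by simp only [up, Set.mem_setOf_eq]; linarith, Set.mem_Ioi.mpr h2⟩
    have hdj : Disjoint (up (x - t) ∩ {p | p.2 ∈ Set.Ioi (x - X)} ∩
          {p | p.1 ∈ Set.Iio (X - t)})
        (Set.Ici (X - t) ×ˢ Set.Ioi (x - X)) := by
      refine Set.disjoint_left.mpr ?_
      rintro p ⟨_, h1⟩ ⟨h2, _⟩
      simp only [Set.mem_setOf_eq, Set.mem_Iio] at h1
      simp only [Set.mem_Ici] at h2
      linarith
    have h3 := pr_mono (F := F) (G := G) hsub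
    rwa [measure_union hdj (measurableSet_Ici.prod measurableSet_Ioi),
      ENNReal.toReal_add (pr_ne_top _) (pr_ne_top _), pr_rect] at h3
  have hD2 : ((F.prod G) (up x ∩ {p | p.2 ∈ Set.Ioi (x - X)})).toReal ≤
      ((F.prod G) (up x ∩ {p | p.2 ∈ Set.Ioi (x - X)} ∩
        {p | p.1 ∈ Set.Iio (X - t)})).toReal
      + (F (Set.Ico (X - t) X)).toReal * (G (Set.Ioi (x - X))).toReal
      + (F (Set.Ici X)).toReal * (G (Set.Ioi (x - X))).toReal := by
    have hcov : up x ∩ {p | p.2 ∈ Set.Ioi (x - X)} ⊆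
        ((up x ∩ {p | p.2 ∈ Set.Ioi (x - X)} ∩ {p | p.1 ∈ Set.Iio (X - t)}) ∪
        (Set.Ico (X - t) X ×ˢ Set.Ioi (x - X))) ∪ (Set.Ici X ×ˢ Set.Ioi (x - X)) := by
      rintro p ⟨h1, h2⟩
      rcases lt_or_ge p.1 (X - t) with h3 | h3
      · exact Or.inl (Or.inl ⟨⟨h1, h2⟩, h3⟩)
      · rcases lt_or_ge p.1 X with h4 | h4
        · exact Or.inl (Or.inr ⟨⟨h3, h4⟩, h2⟩)
        · exact Or.inr ⟨h4, h2⟩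
    have hle : (F.prod G) (up x ∩ {p | p.2 ∈ Set.Ioi (x - X)}) ≤
        (F.prod G) (up x ∩ {p | p.2 ∈ Set.Ioi (x - X)} ∩ {p | p.1 ∈ Set.Iio (X - t)}) +
        (F.prod G) (Set.Ico (X - t) X ×ˢ Set.Ioi (x - X)) +
        (F.prod G) (Set.Ici X ×ˢ Set.Ioi (x - X)) :=
      (measure_mono hcov).trans ((measure_union_le _ _).trans
        (add_le_add_left (measure_union_le _ _) _))
    have h2 := (ENNReal.toReal_le_toReal (pr_ne_top _) (by
        exact ENNReal.add_ne_top.mpr ⟨ENNReal.add_ne_top.mpr ⟨pr_ne_top _, pr_ne_top _⟩,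
          pr_ne_top _⟩)).mpr hle
    rwa [ENNReal.toReal_add (ENNReal.add_ne_top.mpr ⟨pr_ne_top _, pr_ne_top _⟩) (pr_ne_top _),
      ENNReal.toReal_add (pr_ne_top _) (pr_ne_top _), pr_rect, pr_rect] at h2
  -- comparison of F-masses
  have htoReal_mono : ∀ {A B : Set ℝ}, A ⊆ B → (F A).toReal ≤ (F B).toReal :=
    fun hAB => (ENNReal.toReal_le_toReal (measure_ne_top _ _) (measure_ne_top _ _)).mpr
      (measure_mono hAB)
  have hr2m : (F (Set.Ico (X - t) X)).toReal ≤ (F (Set.Icc (X - t) (X + T))).toReal := by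
    refine htoReal_mono ?_
    intro u hu
    simp only [Set.mem_Ico] at hu
    exact ⟨hu.1, by linarith [hu.2]⟩
  have hr3a : (F (Set.Ici X)).toReal ≤
      (F (Set.Icc X (X + T))).toReal + (F (Set.Ioi (X + T))).toReal := by
    have hcov : Set.Ici X ⊆ Set.Icc X (X + T) ∪ Set.Ioi (X + T) := by
      intro u hu
      simp only [Set.mem_Ici] at hu
      rcases le_or_gt u (X + T) with h1 | h1
      · exact Or.inl ⟨hu, h1⟩
      · exact Or.inr h1
    have h0 : F (Set.Ici X) ≤ F (Set.Icc X (X + T)) + F (Set.Ioi (X + T)) :=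
      (measure_mono hcov).trans (measure_union_le _ _)
    have h2 := (ENNReal.toReal_le_toReal (measure_ne_top _ _) (by
        exact ENNReal.add_ne_top.mpr ⟨measure_ne_top _ _, measure_ne_top _ _⟩)).mpr h0
    rwa [ENNReal.toReal_add (measure_ne_top _ _) (measure_ne_top _ _)] at h2
  have hr3b : (F (Set.Icc X (X + T))).toReal ≤ (F (Set.Icc (X - t) (X + T))).toReal := by
    refine htoReal_mono ?_
    intro u hu
    simp only [Set.mem_Icc] at hu
    exact ⟨by linarith [hu.1], hu.2⟩
  have hr3c : (F (Set.Ioi (X + T))).toReal * (G (Set.Ioi (x - X))).toReal ≤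
      tail (mconv F G) (x + T) := by
    rw [tail_mconv, ← pr_rect]
    refine pr_mono ?_
    rintro ⟨u, v⟩ ⟨hu, hv⟩
    simp only [Set.mem_Ioi] at hu hv
    simp only [up, Set.mem_setOf_eq]
    linarith
  -- assemble everything
  have hpxt := hpart (x - t)
  have hpx := hpart x
  rw [← tail_mconv] at hpxt hpx hbulk htopm
  set q := (G (Set.Icc a (a+w))).toReal with hq_def
  set c1 := ((F.prod G) (up (x - t) ∩ {p | p.2 ∈ Set.Icc a (a+w)})).toReal with hc1_def
  set c2 := ((F.prod G) (up x ∩ {p | p.2 ∈ Set.Icc a (a+w)})).toReal with hc2_def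
  set b1 := ((F.prod G) (up (x - t) ∩
    {p | p.2 ∈ Set.Iic (x - X) \ Set.Icc a (a+w)})).toReal with hb1_def
  set b2 := ((F.prod G) (up x ∩
    {p | p.2 ∈ Set.Iic (x - X) \ Set.Icc a (a+w)})).toReal with hb2_def
  set d1 := ((F.prod G) (up (x - t) ∩ {p | p.2 ∈ Set.Ioi (x - X)})).toReal with hd1_def
  set d2 := ((F.prod G) (up x ∩ {p | p.2 ∈ Set.Ioi (x - X)})).toReal with hd2_def
  set d1a := ((F.prod G) (up (x - t) ∩ {p | p.2 ∈ Set.Ioi (x - X)} ∩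
    {p | p.1 ∈ Set.Iio (X - t)})).toReal with hd1a_def
  set d2a := ((F.prod G) (up x ∩ {p | p.2 ∈ Set.Ioi (x - X)} ∩
    {p | p.1 ∈ Set.Iio (X - t)})).toReal with hd2a_def
  set g3 := (G (Set.Ioi (x - X))).toReal with hg3_def
  set r2f := (F (Set.Ico (X - t) X)).toReal with hr2f_def
  set r3f := (F (Set.Ici X)).toReal with hr3f_def
  set mf := (F (Set.Icc (X - t) (X + T))).toReal with hmf_def
  set oT := (F (Set.Ioi (X + T))).toReal with hoT_def
  have hg30 : (0:ℝ) ≤ g3 := by rw [hg3_def]; exact ENNReal.toReal_nonneg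
  have s0 : Real.exp (γ*t) * tail (mconv F G) x
      = Real.exp (γ*t) * (c2 + b2 + d2) := by rw [hpx]
  have s1 : Real.exp (γ*t) * d2 ≤ Real.exp (γ*t) * (d2a + r2f * g3 + r3f * g3) :=
    mul_le_mul_of_nonneg_left hD2 he0
  have hr2g : r2f * g3 ≤ tail (mconv F G) (x-t) / K :=
    le_trans (mul_le_mul_of_nonneg_right hr2m hg30) hmG
  have hr3g : r3f * g3 ≤ tail (mconv F G) (x-t) / K + tail (mconv F G) (x + T) := by
    have h1 : r3f * g3 ≤ (mf + oT) * g3 :=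
      mul_le_mul_of_nonneg_right (le_trans hr3a (add_le_add_left hr3b _)) hg30
    have h2 : (mf + oT) * g3 = mf * g3 + oT * g3 := by ring
    linarith [hmG, hr3c]
  have s2 : (Real.exp (γ*t) - 1) * (r2f * g3) ≤
      (Real.exp (γ*t) - 1) * (tail (mconv F G) (x-t) / K) :=
    mul_le_mul_of_nonneg_left hr2g (by linarith)
  have s3 : (Real.exp (γ*t) - 1) * (r3f * g3) ≤
      (Real.exp (γ*t) - 1) * (tail (mconv F G) (x-t) / K + tail (mconv F G) (x + T)) :=
    mul_le_mul_of_nonneg_left hr3g (by linarith)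
  have s4 : Real.exp (γ*t) * c2 ≤ Real.exp (γ*t) * (q * tail F (x-a-w)) :=
    mul_le_mul_of_nonneg_left hcap2 he0
  rw [hIci_split] at hD1
  linarith [hpxt, hcap1, hbulk, htopm, hD1, s0, s1, s2, s3, s4]

end Master
end StmtAux

namespace StmtAux

section Key

variable {F G : Measure ℝ} [IsProbabilityMeasure F] [IsProbabilityMeasure G] {γ : ℝ}

lemma tail_le_tail_mconv (hsG : G (Set.Iio 0) = 0) (z : ℝ) :
    tail F z ≤ tail (mconv F G) z := by
  rw [tail_def, tail_mconv]
  have hG1 : G (Set.Ici 0) = 1 := by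
    rw [← Set.compl_Iio, prob_compl_eq_one_sub measurableSet_Iio, hsG, tsub_zero]
  have hsub : Set.Ioi z ×ˢ Set.Ici 0 ⊆ up z := by
    rintro ⟨u, v⟩ ⟨hu, hv⟩
    simp only [Set.mem_Ioi] at hu
    simp only [Set.mem_Ici] at hv
    simp only [up, Set.mem_setOf_eq]
    linarith
  calc (F (Set.Ioi z)).toReal = ((F.prod G) (Set.Ioi z ×ˢ Set.Ici 0)).toReal := by
        rw [Measure.prod_prod, hG1, mul_one]
    _ ≤ ((F.prod G) (up z)).toReal := pr_mono hsub

set_option maxHeartbeats 2000000 in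
lemma key (hγ : 0 ≤ γ) (hsF : F (Set.Iio 0) = 0) (hsG : G (Set.Iio 0) = 0)
    (hL : MemL γ (mconv F G))
    (hlimF : ∀ t > (0:ℝ),
      Real.exp (γ*t) ≤ Filter.liminf (fun x => tail F (x-t) / tail F x) atTop)
    (hlimG : ∀ t > (0:ℝ),
      Real.exp (γ*t) ≤ Filter.liminf (fun x => tail G (x-t) / tail G x) atTop)
    (t : ℝ) (htpos : 0 < t) :
    (fun x => |tail F (x - t) - Real.exp (γ * t) * tail F x|) =o[atTop]
      fun x => tail (mconv F G) x := by
  have hFpos := tail_pos_of_hlim (γ := γ) F hlimF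
  have hGpos := tail_pos_of_hlim (γ := γ) G hlimG
  have hHpos := tail_pos_of_memL (mconv F G) hL
  rw [Asymptotics.isLittleO_iff]
  intro c hc
  -- choose w
  obtain ⟨w, hw, hwle⟩ : ∃ w : ℝ, 0 < w ∧
      Real.exp (γ*(t+w)) - Real.exp (γ*t) ≤ c/2 := by
    rcases hγ.eq_or_lt with hγ0 | hγ0
    · refine ⟨1, one_pos, ?_⟩
      rw [← hγ0]
      simp only [zero_mul, Real.exp_zero, sub_self]
      positivity
    · refine ⟨γ⁻¹ * Real.log (1 + c/(2*Real.exp (γ*t))), ?_, ?_⟩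
      · have h1 : (1:ℝ) < 1 + c/(2*Real.exp (γ*t)) := by
          have : 0 < c/(2*Real.exp (γ*t)) := by positivity
          linarith
        exact mul_pos (inv_pos.mpr hγ0) (Real.log_pos h1)
      · have hγne : γ ≠ 0 := ne_of_gt hγ0
        have h1 : γ * (γ⁻¹ * Real.log (1 + c/(2*Real.exp (γ*t)))) =
            Real.log (1 + c/(2*Real.exp (γ*t))) := by
          field_simp
        rw [mul_add, Real.exp_add, h1, Real.exp_log (by positivity)]
        have hene : Real.exp (γ*t) ≠ 0 := (Real.exp_pos _).ne'
        refine le_of_eq ?_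
        field_simp
        ring
  obtain ⟨tt, htt_def⟩ : ∃ tt : ℝ, tt = t + w := ⟨_, rfl⟩
  rw [← htt_def] at hwle
  have httpos : 0 < tt := by rw [htt_def]; linarith
  have hwtt : w < tt := by rw [htt_def]; linarith
  have hE1 : (1:ℝ) ≤ Real.exp (γ*tt) := Real.one_le_exp (mul_nonneg hγ httpos.le)
  have hE0 : (0:ℝ) < Real.exp (γ*tt) := Real.exp_pos _
  -- choose the interval of positive G-mass
  obtain ⟨a, ha, hq0⟩ := exists_interval (G := G) hsG hw
  obtain ⟨q, hq_def⟩ : ∃ q : ℝ, q = (G (Set.Icc a (a+w))).toReal := ⟨_, rfl⟩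
  have hq : 0 < q := by rw [hq_def]; exact hq0
  -- choose T
  obtain ⟨T, hT0, hTle⟩ : ∃ T : ℝ, 0 ≤ T ∧
      (Real.exp (γ*tt) - 1) * Real.exp (γ * -T) ≤ q*c/8 := by
    rcases hγ.eq_or_lt with hγ0 | hγ0
    · refine ⟨0, le_refl _, ?_⟩
      rw [← hγ0]
      simp only [zero_mul, Real.exp_zero, sub_self, zero_mul]
      positivity
    · have hγne : γ ≠ 0 := ne_of_gt hγ0
      have hqc : (0:ℝ) < q*c := mul_pos hq hc
      obtain ⟨A, hA_def⟩ : ∃ A : ℝ, A = (Real.exp (γ*tt) - 1) * 8 / (q*c) := ⟨_, rfl⟩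
      have hA0 : 0 ≤ A := by
        rw [hA_def]
        have : (0:ℝ) ≤ Real.exp (γ*tt) - 1 := by linarith
        positivity
      refine ⟨γ⁻¹ * Real.log (A+1), ?_, ?_⟩
      · have h2 : 0 ≤ Real.log (A+1) := Real.log_nonneg (by linarith)
        have h3 : 0 ≤ γ⁻¹ := (inv_pos.mpr hγ0).le
        exact mul_nonneg h3 h2
      · have h1 : γ * -(γ⁻¹ * Real.log (A+1)) = -Real.log (A+1) := by
          rw [mul_neg, ← mul_assoc, mul_inv_cancel₀ hγne, one_mul]
        rw [h1, Real.exp_neg, Real.exp_log (by linarith)]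
        have hA1 : (0:ℝ) < A + 1 := by linarith
        rw [mul_comm (Real.exp (γ*tt) - 1), inv_mul_le_iff₀ hA1]
        have h2 : (A+1) * (q*c/8) = (Real.exp (γ*tt) - 1) + q*c/8 := by
          rw [hA_def]
          field_simp
          try ring
        linarith
  -- choose K
  obtain ⟨K, hK1, hKle⟩ : ∃ K : ℕ, 1 ≤ K ∧
      (Real.exp (γ*tt) - 1) * (4*Real.exp (γ*tt) / K) ≤ q*c/8 := by
    have hqc : (0:ℝ) < q*c := mul_pos hq hc
    obtain ⟨K, hK⟩ := exists_nat_gt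
      (max 1 ((Real.exp (γ*tt) - 1) * (4*Real.exp (γ*tt)) * 8 / (q*c)))
    have h1K : (1:ℝ) < K := (le_max_left _ _).trans_lt hK
    have hK1 : 1 ≤ K := by exact_mod_cast h1K.le
    have hKpos : (0:ℝ) < K := by linarith
    refine ⟨K, hK1, ?_⟩
    have hB := (le_max_right _ _).trans_lt hK
    rw [div_lt_iff₀ hqc] at hB
    rw [show (Real.exp (γ*tt) - 1) * (4*Real.exp (γ*tt) / (K:ℝ))
        = ((Real.exp (γ*tt) - 1) * (4*Real.exp (γ*tt))) / (K:ℝ) from by ring,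
      div_le_iff₀ hKpos]
    nlinarith
  -- choose ε
  obtain ⟨ε, hε_def⟩ : ∃ ε : ℝ, ε = q*c/(8*(3 + Real.exp (γ*tt))) := ⟨_, rfl⟩
  have hεpos : 0 < ε := by
    rw [hε_def]
    have : (0:ℝ) < 3 + Real.exp (γ*tt) := by linarith
    positivity
  have hεsum : (3 + Real.exp (γ*tt)) * ε = q*c/8 := by
    rw [hε_def]
    have hne : (3 + Real.exp (γ*tt)) ≠ 0 := by positivity
    field_simp
    try ring
  -- the eventual pointwise lower bounds from the liminf hypotheses
  have hevF := eventually_ratio (γ := γ) (hlimF tt httpos) hFpos hεpos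
  have hevG := eventually_ratio (γ := γ) (hlimG tt httpos) hGpos hεpos
  obtain ⟨X₀, hX₀⟩ := eventually_atTop.mp (hevF.and hevG)
  -- apply the master inequality
  have hmaster := master (F := F) (G := G) hγ hw hwtt ha hεpos hT0 hK1
      (fun z hz => (hX₀ z hz).1) (fun z hz => (hX₀ z hz).2)
  rw [← hq_def] at hmaster
  -- bounds on the convolution tail ratios
  have hHb1 := hH_bounds (F := F) (G := G) hL tt hεpos
  have hHb2 := hH_bounds (F := F) (G := G) hL (-T) hεpos
  have hHb3 := hH_bounds (F := F) (G := G) hL tt hE0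
  have hcomb : ∀ᶠ x in atTop,
      q * (tail F (x-a-tt) - Real.exp (γ*tt) * tail F (x-a-w)) ≤
        (q*c/2) * tail (mconv F G) (x-a-w) := by
    filter_upwards [hmaster, hHb1, hHb2, hHb3] with x h1 h2 h3 h4
    have hxpos : (0:ℝ) ≤ tail (mconv F G) x := tail_nonneg _ _
    have hE1' : (0:ℝ) ≤ Real.exp (γ*tt) - 1 := by linarith
    have p1 : tail (mconv F G) (x - tt) - Real.exp (γ*tt) * tail (mconv F G) x ≤
        ε * tail (mconv F G) x := h2.2
    have p2 : tail (mconv F G) (x - tt) ≤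
        2*Real.exp (γ*tt) * tail (mconv F G) x := by
      have := h4.1
      linarith
    have p3 : tail (mconv F G) (x + T) ≤
        (Real.exp (γ * -T) + ε) * tail (mconv F G) x := by
      have h5 := h3.1
      rwa [sub_neg_eq_add] at h5
    have hKpos : (0:ℝ) < (K:ℝ) := by exact_mod_cast hK1
    have p2' : tail (mconv F G) (x - tt) / K ≤
        (2*Real.exp (γ*tt) * tail (mconv F G) x) / K := by gcongr
    have u1 : (Real.exp (γ*tt) - 1) * (2*(tail (mconv F G) (x-tt)/K)) ≤
        (Real.exp (γ*tt) - 1) * (2*((2*Real.exp (γ*tt) * tail (mconv F G) x)/K)) :=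
      mul_le_mul_of_nonneg_left (by linarith) hE1'
    have u2 : (Real.exp (γ*tt) - 1) * tail (mconv F G) (x+T) ≤
        (Real.exp (γ*tt) - 1) * ((Real.exp (γ * -T) + ε) * tail (mconv F G) x) :=
      mul_le_mul_of_nonneg_left p3 hE1'
    have u3 : (Real.exp (γ*tt) - 1) * (2*((2*Real.exp (γ*tt) * tail (mconv F G) x)/K))
        = ((Real.exp (γ*tt) - 1) * (4*Real.exp (γ*tt)/K)) * tail (mconv F G) x := by
      ring
    have u4 : ((Real.exp (γ*tt) - 1) * (4*Real.exp (γ*tt)/K)) * tail (mconv F G) x ≤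
        (q*c/8) * tail (mconv F G) x := mul_le_mul_of_nonneg_right hKle hxpos
    have u5 : (Real.exp (γ*tt) - 1) * ((Real.exp (γ * -T) + ε) * tail (mconv F G) x)
        = ((Real.exp (γ*tt) - 1) * Real.exp (γ * -T)) * tail (mconv F G) x
          + (Real.exp (γ*tt) - 1) * ε * tail (mconv F G) x := by ring
    have u6 : ((Real.exp (γ*tt) - 1) * Real.exp (γ * -T)) * tail (mconv F G) x ≤
        (q*c/8) * tail (mconv F G) x := mul_le_mul_of_nonneg_right hTle hxpos
    have u7 : 3 * ε * tail (mconv F G) x +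
        (Real.exp (γ*tt) - 1) * ε * tail (mconv F G) x ≤ (q*c/8) * tail (mconv F G) x := by
      have h6 : 3 * ε + (Real.exp (γ*tt) - 1) * ε ≤ (3 + Real.exp (γ*tt)) * ε := by
        have : (0:ℝ) ≤ ε := hεpos.le
        nlinarith
      have h7 := mul_le_mul_of_nonneg_right h6 hxpos
      rw [hεsum] at h7
      linarith
    have hmono : tail (mconv F G) x ≤ tail (mconv F G) (x-a-w) :=
      tail_anti (mconv F G) (by linarith : x - a - w ≤ x)
    have hcq : (0:ℝ) ≤ q*c/2 := by
      have := mul_pos hq hc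
      linarith
    have uu : (Real.exp (γ*tt) - 1) * (2*(tail (mconv F G) (x-tt)/K) + tail (mconv F G) (x+T))
        = (Real.exp (γ*tt) - 1) * (2*(tail (mconv F G) (x-tt)/K))
          + (Real.exp (γ*tt) - 1) * tail (mconv F G) (x+T) := by ring
    have hcq8 : (0:ℝ) ≤ (q*c/8) * tail (mconv F G) x :=
      mul_nonneg (by positivity) hxpos
    have h8 : q * (tail F (x-a-tt) - Real.exp (γ*tt) * tail F (x-a-w)) ≤
        (q*c/2) * tail (mconv F G) x := by
      linarith [h1, hcq8]
    calc q * (tail F (x-a-tt) - Real.exp (γ*tt) * tail F (x-a-w)) ≤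
          (q*c/2) * tail (mconv F G) x := h8
      _ ≤ (q*c/2) * tail (mconv F G) (x-a-w) := mul_le_mul_of_nonneg_left hmono hcq
  -- shift x ↦ y + (a+w)
  have hshift : Filter.Tendsto (fun y : ℝ => y + (a+w)) atTop atTop :=
    tendsto_atTop_add_const_right _ _ tendsto_id
  have hup : ∀ᶠ y in atTop,
      tail F (y - t) - Real.exp (γ*tt) * tail F y ≤ (c/2) * tail (mconv F G) y := by
    filter_upwards [hshift.eventually hcomb] with y hy
    rw [show y + (a+w) - a - tt = y - t from by rw [htt_def]; ring,
      show y + (a+w) - a - w = y from by ring] at hy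
    have := (mul_le_mul_iff_right₀ hq).mp (by
      calc q * (tail F (y - t) - Real.exp (γ*tt) * tail F y) ≤
            (q*c/2) * tail (mconv F G) y := hy
        _ = q * ((c/2) * tail (mconv F G) y) := by ring)
    exact this
  -- conclude
  have hlow := eventually_ratio (γ := γ) (hlimF t htpos) hFpos hc
  filter_upwards [hup, hlow] with y h1 h2
  rw [Real.norm_eq_abs, Real.norm_eq_abs, abs_abs,
    abs_of_nonneg (tail_nonneg (mconv F G) y)]
  have hFH := tail_le_tail_mconv (F := F) (G := G) hsG y
  have hFH' := tail_le_tail_mconv (F := F) (G := G) hsG (y - t)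
  have hF0 : (0:ℝ) ≤ tail F y := tail_nonneg _ _
  have hcFH := mul_le_mul_of_nonneg_left hFH hc.le
  refine abs_le.mpr ⟨by linarith, ?_⟩
  -- upper bound
  have hEw : Real.exp (γ*tt) - Real.exp (γ*t) ≤ c/2 := hwle
  have hEw0 : (0:ℝ) ≤ Real.exp (γ*tt) - Real.exp (γ*t) := by
    have : γ*t ≤ γ*tt := by
      rw [htt_def]
      nlinarith
    linarith [Real.exp_le_exp.mpr this]
  have h3 : (Real.exp (γ*tt) - Real.exp (γ*t)) * tail F y ≤ (c/2) * tail (mconv F G) y := by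
    calc (Real.exp (γ*tt) - Real.exp (γ*t)) * tail F y ≤ (c/2) * tail F y :=
          mul_le_mul_of_nonneg_right hEw hF0
      _ ≤ (c/2) * tail (mconv F G) y := mul_le_mul_of_nonneg_left hFH (by positivity)
  linarith [h1, h3]

end Key
end StmtAux


theorem stmt0 (F₁ F₂ : Measure ℝ) [IsProbabilityMeasure F₁] [IsProbabilityMeasure F₂]
    (hs₁ : F₁ (Set.Iio 0) = 0) (hs₂ : F₂ (Set.Iio 0) = 0)
    (γ : ℝ) (hγ : 0 ≤ γ) (hL : MemL γ (mconv F₁ F₂))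
    (hlim₁ : ∀ t > (0 : ℝ),
      Real.exp (γ * t) ≤ Filter.liminf (fun x => tail F₁ (x - t) / tail F₁ x) Filter.atTop)
    (hlim₂ : ∀ t > (0 : ℝ),
      Real.exp (γ * t) ≤ Filter.liminf (fun x => tail F₂ (x - t) / tail F₂ x) Filter.atTop) :
    ∀ t > (0 : ℝ),
      ((fun x => |tail F₁ (x - t) - Real.exp (γ * t) * tail F₁ x|) =o[Filter.atTop]
        fun x => tail (mconv F₁ F₂) x) ∧
      ((fun x => |tail F₂ (x - t) - Real.exp (γ * t) * tail F₂ x|) =o[Filter.atTop]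
        fun x => tail (mconv F₁ F₂) x) := by
  intro t ht
  have hcomm : mconv F₁ F₂ = mconv F₂ F₁ := StmtAux.mconv_comm
  constructor
  · exact StmtAux.key hγ hs₁ hs₂ hL hlim₁ hlim₂ t ht
  · have hL2 : MemL γ (mconv F₂ F₁) := by rwa [← hcomm]
    have h := StmtAux.key hγ hs₂ hs₁ hL2 hlim₂ hlim₁ t ht
    rwa [← hcomm] at h
end

section
/- Let F₁, F₂ be distributions on [0,∞) with F₂ ∈ L(γ) for some γ ≥ 0. Assume: (a) for i = 1,2 and all t > 0, liminf_{x→∞} F̄ᵢ(x-t)/F̄ᵢ(x) ≥ e^{γt}; and (b) for all t > 0, |F̄₁(x-t) - e^{γt}F̄₁(x)| = o(F̄₂(x)) as x → ∞. Then F₁*F₂ ∈ L(γ). -/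
open MeasureTheory Filter Set Asymptotics Topology
open scoped ENNReal

lemma madd : Measurable fun p : ℝ × ℝ => p.1 + p.2 := measurable_fst.add measurable_snd

lemma tail_nonneg (μ : Measure ℝ) (x : ℝ) : 0 ≤ tail μ x := ENNReal.toReal_nonneg

lemma tail_anti (μ : Measure ℝ) [IsFiniteMeasure μ] : Antitone (tail μ) := fun x y hxy =>
  ENNReal.toReal_mono (measure_ne_top μ _) (measure_mono (Set.Ioi_subset_Ioi hxy))

lemma tail_le_one (μ : Measure ℝ) [IsProbabilityMeasure μ] (x : ℝ) : tail μ x ≤ 1 := by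
  have h := ENNReal.toReal_mono ENNReal.one_ne_top (prob_le_one (μ := μ) (s := Set.Ioi x))
  simpa [tail] using h

lemma tail_meas (μ : Measure ℝ) [IsFiniteMeasure μ] (a : ℝ) :
    Measurable fun u => tail μ (a - u) := by
  have : Monotone fun u => tail μ (a - u) := fun x y hxy =>
    tail_anti μ (by linarith)
  exact this.measurable

instance mconv_prob (μ ν : Measure ℝ) [IsProbabilityMeasure μ] [IsProbabilityMeasure ν] :
    IsProbabilityMeasure (mconv μ ν) :=
  Measure.isProbabilityMeasure_map madd.aemeasurable

lemma mconv_Ioi (F₁ F₂ : Measure ℝ) [IsProbabilityMeasure F₁] [IsProbabilityMeasure F₂] (a : ℝ) :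
    mconv F₁ F₂ (Set.Ioi a) = ∫⁻ u, F₂ (Set.Ioi (a - u)) ∂F₁ := by
  rw [mconv, Measure.map_apply madd measurableSet_Ioi, Measure.prod_apply (madd measurableSet_Ioi)]
  congr 1; ext u; congr 1; ext y
  simp [Set.mem_Ioi]; constructor <;> intro h <;> linarith

lemma mconv_cut (F₁ F₂ : Measure ℝ) [IsProbabilityMeasure F₁] [IsProbabilityMeasure F₂]
    (a c : ℝ) :
    mconv F₁ F₂ (Set.Ioi a) =
      (∫⁻ u in Set.Iic c, F₂ (Set.Ioi (a - u)) ∂F₁) +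
        ∫⁻ y, F₁ (Set.Ioi (max (a - y) c)) ∂F₂ := by
  have hT : MeasurableSet ((fun p : ℝ × ℝ => p.1 + p.2) ⁻¹' Set.Ioi a) :=
    madd measurableSet_Ioi
  rw [mconv, Measure.map_apply madd measurableSet_Ioi]
  set T := (fun p : ℝ × ℝ => p.1 + p.2) ⁻¹' Set.Ioi a with hTdef
  have hsplit : T = (T ∩ {p : ℝ × ℝ | p.1 ≤ c}) ∪ (T ∩ {p : ℝ × ℝ | c < p.1}) := by
    ext p; simp only [Set.mem_union, Set.mem_inter_iff, Set.mem_setOf_eq]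
    by_cases h : p.1 ≤ c
    · tauto
    · push_neg at h; tauto
  have hm1 : MeasurableSet (T ∩ {p : ℝ × ℝ | p.1 ≤ c}) :=
    hT.inter (measurable_fst measurableSet_Iic)
  have hm2 : MeasurableSet (T ∩ {p : ℝ × ℝ | c < p.1}) :=
    hT.inter (measurable_fst measurableSet_Ioi)
  have hdisj : Disjoint (T ∩ {p : ℝ × ℝ | p.1 ≤ c}) (T ∩ {p : ℝ × ℝ | c < p.1}) := by
    apply Set.disjoint_left.2
    rintro p ⟨-, h1⟩ ⟨-, h2⟩
    simp only [Set.mem_setOf_eq] at h1 h2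
    exact absurd h1 (not_le.2 h2)
  rw [hsplit, measure_union hdisj hm2]
  congr 1
  · rw [Measure.prod_apply hm1]
    rw [← MeasureTheory.lintegral_indicator measurableSet_Iic
      (fun u => F₂ (Set.Ioi (a - u)))]
    apply lintegral_congr
    intro u
    by_cases hu : u ≤ c
    · rw [Set.indicator_of_mem (Set.mem_Iic.2 hu)]
      congr 1
      ext y
      simp only [hTdef, Set.mem_preimage, Set.mem_inter_iff, Set.mem_setOf_eq, Set.mem_Ioi]
      constructor
      · rintro ⟨h1, -⟩; linarith
      · intro h; exact ⟨by linarith, hu⟩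
    · rw [Set.indicator_of_notMem (by simpa using hu)]
      have hemp : Prod.mk u ⁻¹' (T ∩ {p : ℝ × ℝ | p.1 ≤ c}) = ∅ := by
        ext y
        simp only [hTdef, Set.mem_preimage, Set.mem_inter_iff, Set.mem_setOf_eq,
          Set.mem_empty_iff_false, iff_false, not_and]
        intro _; exact hu
      rw [hemp]
      exact measure_empty
  · rw [Measure.prod_apply_symm hm2]
    apply lintegral_congr
    intro y
    congr 1
    ext u
    simp only [hTdef, Set.mem_preimage, Set.mem_inter_iff, Set.mem_setOf_eq, Set.mem_Ioi,
      max_lt_iff]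
    constructor
    · rintro ⟨h1, h2⟩; exact ⟨by linarith, h2⟩
    · rintro ⟨h1, h2⟩; exact ⟨by linarith, h2⟩

lemma lint_tail_ne_top (F₁ F₂ : Measure ℝ) [IsProbabilityMeasure F₁] [IsProbabilityMeasure F₂]
    (a : ℝ) : (∫⁻ u, F₂ (Set.Ioi (a - u)) ∂F₁) ≠ ⊤ := by
  rw [← mconv_Ioi]
  exact measure_ne_top _ _

lemma meas_enn (F₂ : Measure ℝ) (a : ℝ) : Measurable fun u : ℝ => F₂ (Set.Ioi (a - u)) := by
  have : Monotone fun u : ℝ => F₂ (Set.Ioi (a - u)) := fun x y hxy =>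
    measure_mono (Set.Ioi_subset_Ioi (by linarith))
  exact this.measurable

lemma tail_mconv (F₁ F₂ : Measure ℝ) [IsProbabilityMeasure F₁] [IsProbabilityMeasure F₂]
    (a : ℝ) : tail (mconv F₁ F₂) a = ∫ u, tail F₂ (a - u) ∂F₁ := by
  simp only [tail]
  rw [mconv_Ioi, ← MeasureTheory.integral_toReal ((meas_enn F₂ a).aemeasurable)
    (Filter.Eventually.of_forall fun u => measure_lt_top _ _)]

lemma meas_enn2 (F₁ : Measure ℝ) (a c : ℝ) :
    Measurable fun y : ℝ => F₁ (Set.Ioi (max (a - y) c)) := by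
  have : Monotone fun y : ℝ => F₁ (Set.Ioi (max (a - y) c)) := fun x y hxy => by
    apply measure_mono
    apply Set.Ioi_subset_Ioi
    exact max_le_max (by linarith) le_rfl
  exact this.measurable

lemma tail_mconv_cut (F₁ F₂ : Measure ℝ) [IsProbabilityMeasure F₁] [IsProbabilityMeasure F₂]
    (a c : ℝ) :
    tail (mconv F₁ F₂) a =
      (∫ u in Set.Iic c, tail F₂ (a - u) ∂F₁) + ∫ y, tail F₁ (max (a - y) c) ∂F₂ := by
  have h1 : (∫⁻ u in Set.Iic c, F₂ (Set.Ioi (a - u)) ∂F₁) ≠ ⊤ := by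
    refine ne_top_of_le_ne_top (lint_tail_ne_top F₁ F₂ a) ?_
    exact MeasureTheory.setLIntegral_le_lintegral _ _
  have h2 : (∫⁻ y, F₁ (Set.Ioi (max (a - y) c)) ∂F₂) ≠ ⊤ := by
    refine ne_top_of_le_ne_top ENNReal.one_ne_top ?_
    calc ∫⁻ y, F₁ (Set.Ioi (max (a - y) c)) ∂F₂ ≤ ∫⁻ _, 1 ∂F₂ :=
          lintegral_mono fun y => prob_le_one
      _ = 1 := by simp
  simp only [tail]
  rw [mconv_cut F₁ F₂ a c, ENNReal.toReal_add h1 h2]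
  congr 1
  · rw [← MeasureTheory.integral_toReal ((meas_enn F₂ a).aemeasurable.restrict)
      (Filter.Eventually.of_forall fun u => measure_lt_top _ _)]
  · rw [← MeasureTheory.integral_toReal ((meas_enn2 F₁ a c).aemeasurable)
      (Filter.Eventually.of_forall fun u => measure_lt_top _ _)]

lemma integrable_bdd {g : ℝ → ℝ} (hg : Measurable g) (h1 : ∀ x, |g x| ≤ 1)
    (μ : Measure ℝ) [IsFiniteMeasure μ] : Integrable g μ := by
  refine ⟨hg.aestronglyMeasurable, ?_⟩
  apply MeasureTheory.HasFiniteIntegral.of_bounded (C := 1)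
  exact Filter.Eventually.of_forall fun x => h1 x

lemma tail_abs_le_one (μ : Measure ℝ) [IsProbabilityMeasure μ] (x : ℝ) : |tail μ x| ≤ 1 := by
  rw [abs_of_nonneg (tail_nonneg μ x)]; exact tail_le_one μ x

lemma tail_pos_of_memL {γ : ℝ} (μ : Measure ℝ) [IsProbabilityMeasure μ] (hL : MemL γ μ) (x : ℝ) :
    0 < tail μ x := by
  by_contra hx
  push_neg at hx
  have hx0 : tail μ x = 0 := le_antisymm hx (tail_nonneg μ x)
  have hzero : ∀ z ≥ x, tail μ z = 0 := fun z hz =>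
    le_antisymm (hx0 ▸ tail_anti μ hz) (tail_nonneg μ z)
  have h1 := hL 1
  have h2 : Tendsto (fun z => tail μ (z - 1) / tail μ z) atTop (nhds 0) := by
    apply Tendsto.congr' _ tendsto_const_nhds
    filter_upwards [eventually_ge_atTop (x + 1)] with z hz
    rw [hzero (z - 1) (by linarith), zero_div]
  have := tendsto_nhds_unique h1 h2
  exact absurd this (Real.exp_pos _).ne'

lemma memL_abs_bound {γ : ℝ} (μ : Measure ℝ) [IsProbabilityMeasure μ] (hL : MemL γ μ)
    (t δ : ℝ) (hδ : 0 < δ) :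
    ∀ᶠ z in atTop, |tail μ (z - t) - Real.exp (γ * t) * tail μ z| ≤ δ * tail μ z := by
  have hpos := tail_pos_of_memL μ hL
  have h := (hL t).eventually (Metric.ball_mem_nhds _ hδ)
  filter_upwards [h] with z hz
  rw [Real.dist_eq] at hz
  have hne : tail μ z ≠ 0 := (hpos z).ne'
  have key : tail μ (z - t) - Real.exp (γ * t) * tail μ z
      = (tail μ (z - t) / tail μ z - Real.exp (γ * t)) * tail μ z := by
    field_simp
  rw [key, abs_mul, abs_of_nonneg (tail_nonneg μ z)]
  exact mul_le_mul_of_nonneg_right hz.le (tail_nonneg μ z)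

lemma h_ge_f₂ (F₁ F₂ : Measure ℝ) [IsProbabilityMeasure F₁] [IsProbabilityMeasure F₂]
    (hs₁ : F₁ (Set.Iio 0) = 0) (a : ℝ) : tail F₂ a ≤ tail (mconv F₁ F₂) a := by
  rw [tail, tail, mconv_Ioi]
  apply ENNReal.toReal_mono (lint_tail_ne_top F₁ F₂ a)
  calc F₂ (Set.Ioi a) = ∫⁻ _, F₂ (Set.Ioi a) ∂F₁ := by simp
    _ ≤ ∫⁻ u, F₂ (Set.Ioi (a - u)) ∂F₁ := by
        apply lintegral_mono_ae
        have h0 : ∀ᵐ u ∂F₁, 0 ≤ u := by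
          rw [MeasureTheory.ae_iff]
          convert hs₁ using 2
          ext u; simp
        filter_upwards [h0] with u hu
        exact measure_mono (Set.Ioi_subset_Ioi (by linarith))

lemma h_ge_prod (F₁ F₂ : Measure ℝ) [IsProbabilityMeasure F₁] [IsProbabilityMeasure F₂]
    (x B : ℝ) : tail F₁ (x - B) * tail F₂ B ≤ tail (mconv F₁ F₂) x := by
  rw [tail, tail, tail, ← ENNReal.toReal_mul]
  apply ENNReal.toReal_mono (measure_ne_top _ _)
  rw [mconv, Measure.map_apply madd measurableSet_Ioi, ← Measure.prod_prod]
  apply measure_mono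
  rintro ⟨u, y⟩ ⟨hu, hy⟩
  simp only [Set.mem_Ioi] at *
  simp only [Set.mem_preimage, Set.mem_Ioi]
  linarith

lemma h_ge_sum_enn (F₁ F₂ : Measure ℝ) [IsProbabilityMeasure F₁] [IsProbabilityMeasure F₂]
    (x B : ℝ) (N : ℕ) :
    (∑ j ∈ Finset.range N, F₁ (Set.Ioi (x - (B + j))) * F₂ (Set.Ioc (B + j) (B + j + 1)))
      ≤ mconv F₁ F₂ (Set.Ioi x) := by
  rw [mconv, Measure.map_apply madd measurableSet_Ioi]
  set S : ℕ → Set (ℝ × ℝ) := fun j => Set.Ioi (x - (B + j)) ×ˢ Set.Ioc (B + j) (B + j + 1)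
    with hS
  have hmeas : ∀ j ∈ Finset.range N, MeasurableSet (S j) := fun j _ =>
    measurableSet_Ioi.prod measurableSet_Ioc
  have hdisj : (↑(Finset.range N) : Set ℕ).PairwiseDisjoint S := by
    intro i _ j _ hij
    apply Set.disjoint_left.2
    rintro ⟨u, y⟩ ⟨-, hy1⟩ ⟨-, hy2⟩
    simp only [Set.mem_Ioc] at hy1 hy2
    rcases lt_or_gt_of_ne hij with h | h
    · have : (i : ℝ) + 1 ≤ (j : ℝ) := by exact_mod_cast h
      linarith [hy1.2, hy2.1]
    · have : (j : ℝ) + 1 ≤ (i : ℝ) := by exact_mod_cast h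
      linarith [hy1.1, hy2.2]
  calc ∑ j ∈ Finset.range N, F₁ (Set.Ioi (x - (B + j))) * F₂ (Set.Ioc (B + j) (B + j + 1))
      = ∑ j ∈ Finset.range N, (F₁.prod F₂) (S j) := by
        apply Finset.sum_congr rfl
        intro j _
        rw [hS, Measure.prod_prod]
    _ = (F₁.prod F₂) (⋃ j ∈ Finset.range N, S j) :=
        (measure_biUnion_finset hdisj hmeas).symm
    _ ≤ (F₁.prod F₂) ((fun p : ℝ × ℝ => p.1 + p.2) ⁻¹' Set.Ioi x) := by
        apply measure_mono
        intro p hp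
        simp only [Set.mem_iUnion] at hp
        obtain ⟨j, -, hj⟩ := hp
        obtain ⟨h1, h2⟩ := hj
        simp only [Set.mem_Ioi] at h1 ⊢
        simp only [Set.mem_Ioc] at h2
        simp only [Set.mem_preimage, Set.mem_Ioi]
        have := h2.1
        linarith

lemma h_ge_sum (F₁ F₂ : Measure ℝ) [IsProbabilityMeasure F₁] [IsProbabilityMeasure F₂]
    (x B : ℝ) (N : ℕ) :
    (∑ j ∈ Finset.range N,
      tail F₁ (x - (B + j)) * (tail F₂ (B + j) - tail F₂ (B + j + 1)))
      ≤ tail (mconv F₁ F₂) x := by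
  have key := h_ge_sum_enn F₁ F₂ x B N
  have h1 : ∀ j : ℕ, tail F₂ (B + j) - tail F₂ (B + j + 1)
      = (F₂ (Set.Ioc (B + j) (B + j + 1))).toReal := by
    intro j
    have hsplit : Set.Ioi (B + (j : ℝ)) = Set.Ioc (B + j) (B + j + 1) ∪ Set.Ioi (B + j + 1) :=
      (Set.Ioc_union_Ioi_eq_Ioi (by linarith)).symm
    have hdisj : Disjoint (Set.Ioc (B + (j:ℝ)) (B + j + 1)) (Set.Ioi (B + (j:ℝ) + 1)) := by
      apply Set.disjoint_left.2
      rintro y hy1 hy2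
      simp only [Set.mem_Ioc] at hy1
      simp only [Set.mem_Ioi] at hy2
      linarith [hy1.2]
    rw [tail, tail, hsplit, measure_union hdisj measurableSet_Ioi,
      ENNReal.toReal_add (measure_ne_top _ _) (measure_ne_top _ _)]
    ring
  calc (∑ j ∈ Finset.range N,
      tail F₁ (x - (B + j)) * (tail F₂ (B + j) - tail F₂ (B + j + 1)))
      = (∑ j ∈ Finset.range N,
          (F₁ (Set.Ioi (x - (B + j))) * F₂ (Set.Ioc (B + j) (B + j + 1))).toReal) := by
        apply Finset.sum_congr rfl
        intro j _
        rw [h1 j, ENNReal.toReal_mul]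
        rfl
    _ = (∑ j ∈ Finset.range N,
          F₁ (Set.Ioi (x - (B + j))) * F₂ (Set.Ioc (B + j) (B + j + 1))).toReal := by
        rw [ENNReal.toReal_sum]
        intro j _
        exact ENNReal.mul_ne_top (measure_ne_top _ _) (measure_ne_top _ _)
    _ ≤ _ := ENNReal.toReal_mono (measure_ne_top _ _) key

lemma grid (F₁ F₂ : Measure ℝ) [IsProbabilityMeasure F₁] [IsProbabilityMeasure F₂]
    {γ : ℝ} (hγ : 0 < γ) (hL₂ : MemL γ F₂)
    (hlim₁ : ∀ t > (0 : ℝ),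
      Real.exp (γ * t) ≤ Filter.liminf (fun x => tail F₁ (x - t) / tail F₁ x) Filter.atTop)
    (ε : ℝ) (hε : 0 < ε) (B₀ : ℝ) :
    ∃ B ≥ B₀, ∀ᶠ x in atTop, tail F₂ B * tail F₁ (x - B) ≤ ε * tail (mconv F₁ F₂) x := by
  have hexpneg : Real.exp (-γ) < 1 := Real.exp_lt_one_iff.2 (by linarith)
  set c : ℝ := (1 - Real.exp (-γ)) / 4 with hc
  have hcpos : 0 < c := by
    have := Real.exp_pos (-γ)
    simp only [hc]
    linarith
  obtain ⟨N, hN⟩ := exists_nat_ge (1 / (ε * c))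
  -- the per-j B-conditions
  set r : ℕ → ℝ := fun j => Real.exp (-γ * j) * (1 - Real.exp (-γ)) / 4 with hr
  have hrpos : ∀ j : ℕ, 0 < r j := by
    intro j
    have h1 : 0 < 1 - Real.exp (-γ) := by linarith
    simp only [hr]
    exact div_pos (mul_pos (Real.exp_pos _) h1) (by norm_num)
  have hBcond : ∀ j : ℕ, ∀ᶠ B in atTop,
      (Real.exp (-γ * j) - r j) * tail F₂ B ≤ tail F₂ (B + j) ∧
      tail F₂ (B + (j : ℝ) + 1) ≤ (Real.exp (-γ * (j + 1)) + r j) * tail F₂ B := by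
    intro j
    have hpos := tail_pos_of_memL F₂ hL₂
    have e1 := memL_abs_bound F₂ hL₂ (-(j : ℝ)) (r j) (hrpos j)
    have e2 := memL_abs_bound F₂ hL₂ (-((j : ℝ) + 1)) (r j) (hrpos j)
    filter_upwards [e1, e2] with B h1 h2
    constructor
    · have h1' := (abs_le.1 h1).1
      have heq : B - -(j : ℝ) = B + j := by ring
      rw [heq] at h1'
      have heq2 : γ * -(j : ℝ) = -γ * j := by ring
      rw [heq2] at h1'
      nlinarith [tail_nonneg F₂ B]
    · have h2' := (abs_le.1 h2).2
      have heq : B - -((j : ℝ) + 1) = B + j + 1 := by ring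
      rw [heq] at h2'
      have heq2 : γ * -((j : ℝ) + 1) = -γ * (j + 1) := by ring
      rw [heq2] at h2'
      nlinarith [tail_nonneg F₂ B]
  have hBall : ∀ᶠ B in atTop, ∀ j ∈ Finset.range N,
      (Real.exp (-γ * j) - r j) * tail F₂ B ≤ tail F₂ (B + j) ∧
      tail F₂ (B + (j : ℝ) + 1) ≤ (Real.exp (-γ * (j + 1)) + r j) * tail F₂ B :=
    (Filter.eventually_all_finset _).2 fun j _ => hBcond j
  obtain ⟨B, hB, hBge⟩ := (hBall.and (eventually_ge_atTop B₀)).exists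
  refine ⟨B, hBge, ?_⟩
  -- x-conditions: for each j < N, tail F₁ (x - B - j) ≥ (1/2) exp(γ j) tail F₁ (x - B)
  have hxcond : ∀ j : ℕ, ∀ᶠ x in atTop,
      (1 / 2) * Real.exp (γ * j) * tail F₁ (x - B) ≤ tail F₁ (x - B - j) := by
    intro j
    rcases Nat.eq_zero_or_pos j with hj | hj
    · subst hj
      filter_upwards with x
      simp only [Nat.cast_zero, mul_zero, Real.exp_zero, mul_one, sub_zero]
      nlinarith [tail_nonneg F₁ (x - B)]
    · have hjpos : (0 : ℝ) < j := by exact_mod_cast hj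
      have hlb := hlim₁ j hjpos
      have hbdd : Filter.IsBoundedUnder (· ≥ ·) atTop
          (fun x => tail F₁ (x - j) / tail F₁ x) := by
        refine ⟨0, ?_⟩
        rw [Filter.eventually_map]
        filter_upwards with x
        exact div_nonneg (tail_nonneg _ _) (tail_nonneg _ _)
      have hstrict : (1 / 2) * Real.exp (γ * j)
          < Filter.liminf (fun x => tail F₁ (x - j) / tail F₁ x) atTop := by
        have : (1 / 2) * Real.exp (γ * j) < Real.exp (γ * j) := by
          nlinarith [Real.exp_pos (γ * j)]
        linarith
      have hev := Filter.eventually_lt_of_lt_liminf hstrict hbdd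
      -- transfer along z = x - B
      rw [eventually_atTop] at hev ⊢
      obtain ⟨M, hM⟩ := hev
      refine ⟨M + B, fun x hx => ?_⟩
      have hz := hM (x - B) (by linarith)
      rcases eq_or_lt_of_le (tail_nonneg F₁ (x - B)) with h0 | h0
      · rw [← h0]
        simp only [mul_zero]
        exact tail_nonneg _ _
      · have := mul_lt_mul_of_pos_right hz h0
        rw [div_mul_cancel₀ _ h0.ne'] at this
        linarith
  have hxall : ∀ᶠ x in atTop, ∀ j ∈ Finset.range N,
      (1 / 2) * Real.exp (γ * j) * tail F₁ (x - B) ≤ tail F₁ (x - B - j) :=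
    (Filter.eventually_all_finset _).2 fun j _ => hxcond j
  filter_upwards [hxall] with x hx
  -- each term in the grid sum is at least c * tail F₂ B * tail F₁ (x - B)
  have hterm : ∀ j ∈ Finset.range N,
      c * (tail F₂ B * tail F₁ (x - B))
        ≤ tail F₁ (x - (B + j)) * (tail F₂ (B + j) - tail F₂ (B + j + 1)) := by
    intro j hj
    obtain ⟨hB1, hB2⟩ := hB j hj
    have hw : (Real.exp (-γ * j) * (1 - Real.exp (-γ)) / 2) * tail F₂ B
        ≤ tail F₂ (B + j) - tail F₂ (B + j + 1) := by
      have key : Real.exp (-γ * ((j : ℝ) + 1)) = Real.exp (-γ * j) * Real.exp (-γ) := by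
        rw [← Real.exp_add]; ring_nf
      simp only [hr] at hB1 hB2
      rw [key] at hB2
      nlinarith [tail_nonneg F₂ B, Real.exp_pos (-γ * (j : ℝ)), hexpneg]
    have hf : (1 / 2) * Real.exp (γ * j) * tail F₁ (x - B) ≤ tail F₁ (x - (B + j)) := by
      have := hx j hj
      have heq : x - B - j = x - (B + j) := by ring
      rwa [heq] at this
    have hnn1 : 0 ≤ (1 / 2) * Real.exp (γ * j) * tail F₁ (x - B) := by
      have := Real.exp_pos (γ * j)
      have := tail_nonneg F₁ (x - B)
      positivity
    have hnn2 : 0 ≤ (Real.exp (-γ * j) * (1 - Real.exp (-γ)) / 2) * tail F₂ B := by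
      apply mul_nonneg _ (tail_nonneg F₂ B)
      have h1d : 0 < 1 - Real.exp (-γ) := by linarith
      have := Real.exp_pos (-γ * (j : ℝ))
      nlinarith
    have hprod := mul_le_mul hf hw hnn2 (tail_nonneg F₁ _)
    have hee : Real.exp (γ * j) * Real.exp (-γ * j) = 1 := by
      rw [← Real.exp_add]
      ring_nf
      exact Real.exp_zero
    calc c * (tail F₂ B * tail F₁ (x - B))
        = ((1 / 2) * Real.exp (γ * j) * tail F₁ (x - B)) *
            ((Real.exp (-γ * j) * (1 - Real.exp (-γ)) / 2) * tail F₂ B) := by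
          simp only [hc]
          linear_combination (-(1 - Real.exp (-γ)) / 4 * tail F₁ (x - B) * tail F₂ B) * hee
      _ ≤ _ := hprod
  have hsum : (N : ℝ) * (c * (tail F₂ B * tail F₁ (x - B))) ≤ tail (mconv F₁ F₂) x := by
    calc (N : ℝ) * (c * (tail F₂ B * tail F₁ (x - B)))
        = ∑ _j ∈ Finset.range N, c * (tail F₂ B * tail F₁ (x - B)) := by
          rw [Finset.sum_const, Finset.card_range, nsmul_eq_mul]
      _ ≤ ∑ j ∈ Finset.range N,
            tail F₁ (x - (B + j)) * (tail F₂ (B + j) - tail F₂ (B + j + 1)) :=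
          Finset.sum_le_sum hterm
      _ ≤ _ := h_ge_sum F₁ F₂ x B N
  -- conclude
  have hNc : 1 ≤ ε * ((N : ℝ) * c) := by
    rw [div_le_iff₀ (by positivity)] at hN
    calc (1 : ℝ) ≤ (N : ℝ) * (ε * c) := hN
      _ = ε * ((N : ℝ) * c) := by ring
  have hfnn : 0 ≤ tail F₂ B * tail F₁ (x - B) :=
    mul_nonneg (tail_nonneg _ _) (tail_nonneg _ _)
  calc tail F₂ B * tail F₁ (x - B) ≤ ε * ((N : ℝ) * c) * (tail F₂ B * tail F₁ (x - B)) := by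
        nlinarith
    _ = ε * ((N : ℝ) * (c * (tail F₂ B * tail F₁ (x - B)))) := by ring
    _ ≤ ε * tail (mconv F₁ F₂) x := by
        apply mul_le_mul_of_nonneg_left hsum hε.le

lemma tail_max_meas (μ : Measure ℝ) [IsFiniteMeasure μ] (a c : ℝ) :
    Measurable fun y : ℝ => tail μ (max (a - y) c) := by
  have : Monotone fun y : ℝ => tail μ (max (a - y) c) := fun y₁ y₂ h =>
    tail_anti μ (max_le_max (by linarith) le_rfl)
  exact this.measurable

lemma tail_diff (μ : Measure ℝ) [IsFiniteMeasure μ] {a b : ℝ} (hab : a ≤ b) :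
    (μ (Set.Ioc a b)).toReal = tail μ a - tail μ b := by
  have hsplit : Set.Ioi a = Set.Ioc a b ∪ Set.Ioi b := (Set.Ioc_union_Ioi_eq_Ioi hab).symm
  have hdisj : Disjoint (Set.Ioc a b) (Set.Ioi b) := by
    apply Set.disjoint_left.2
    rintro y hy1 hy2
    simp only [Set.mem_Ioc] at hy1
    simp only [Set.mem_Ioi] at hy2
    linarith [hy1.2]
  rw [tail, tail, hsplit, measure_union hdisj measurableSet_Ioi,
    ENNReal.toReal_add (measure_ne_top _ _) (measure_ne_top _ _)]
  ring

lemma main_est (F₁ F₂ : Measure ℝ) [IsProbabilityMeasure F₁] [IsProbabilityMeasure F₂]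
    (hs₁ : F₁ (Set.Iio 0) = 0)
    {γ : ℝ} (hγ : 0 ≤ γ) (hL₂ : MemL γ F₂)
    (hlim₁ : ∀ t > (0 : ℝ),
      Real.exp (γ * t) ≤ Filter.liminf (fun x => tail F₁ (x - t) / tail F₁ x) Filter.atTop)
    (ho : ∀ t > (0 : ℝ),
      (fun x => |tail F₁ (x - t) - Real.exp (γ * t) * tail F₁ x|) =o[Filter.atTop]
        fun x => tail F₂ x)
    {t : ℝ} (ht : 0 < t) {ε : ℝ} (hε : 0 < ε) :
    ∀ᶠ x in atTop,
      |tail (mconv F₁ F₂) (x - t) - Real.exp (γ * t) * tail (mconv F₁ F₂) x|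
        ≤ ε * tail (mconv F₁ F₂) x := by
  set e := Real.exp (γ * t) with he
  have he1 : 1 ≤ e := Real.one_le_exp (mul_nonneg hγ ht.le)
  have hepos : 0 < e := Real.exp_pos _
  -- step 1 : δ₂ bound for F₂ shifts by t
  obtain ⟨Z₀, hZ₀⟩ := eventually_atTop.1 (memL_abs_bound F₂ hL₂ t (ε / 4) (by positivity))
  -- step 2 : choice of B with strip bound
  have hstripB : ∃ B ≥ Z₀, ∀ᶠ x in atTop,
      e * (e - 1) * (tail F₂ B * tail F₁ (x - B)) ≤ ε / 4 * tail (mconv F₁ F₂) x := by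
    rcases eq_or_lt_of_le hγ with hγ0 | hγpos
    · refine ⟨Z₀, le_rfl, ?_⟩
      have he' : e = 1 := by rw [he, ← hγ0, zero_mul, Real.exp_zero]
      filter_upwards with x
      rw [he']
      simp only [sub_self, mul_zero, zero_mul, one_mul]
      have := tail_nonneg (mconv F₁ F₂) x
      positivity
    · have he1' : (1 : ℝ) < e := by
        rw [he]
        exact Real.one_lt_exp_iff.2 (by positivity)
      have hco : (0 : ℝ) < e * (e - 1) := by nlinarith
      obtain ⟨B, hBZ, hB⟩ := grid F₁ F₂ hγpos hL₂ hlim₁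
        (ε / (4 * (e * (e - 1)))) (by positivity) Z₀
      refine ⟨B, hBZ, ?_⟩
      filter_upwards [hB] with x hx
      have h2 := mul_le_mul_of_nonneg_left hx hco.le
      calc e * (e - 1) * (tail F₂ B * tail F₁ (x - B))
          ≤ e * (e - 1) * (ε / (4 * (e * (e - 1))) * tail (mconv F₁ F₂) x) := h2
        _ = ε / 4 * tail (mconv F₁ F₂) x := by
            rw [← mul_assoc, ← mul_div_assoc, mul_comm (e * (e - 1)) ε,
              mul_div_mul_right _ _ hco.ne']
  obtain ⟨B, hBZ, hstrip⟩ := hstripB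
  -- step 3 : CB and δ
  set CB := Real.exp (γ * B) + 1 with hCB
  have hCBpos : 0 < CB := by positivity
  have hCBev : ∀ᶠ x in atTop, tail F₂ (x - B) ≤ CB * tail F₂ x := by
    filter_upwards [memL_abs_bound F₂ hL₂ B 1 one_pos] with x hx
    have h2 := (abs_le.1 hx).2
    rw [hCB]
    nlinarith [tail_nonneg F₂ x]
  set δ := ε / (4 * (e + 1) * CB) with hδ
  have hδpos : 0 < δ := by
    have : (0:ℝ) < e + 1 := by linarith
    positivity
  obtain ⟨A₀, hA₀⟩ := eventually_atTop.1 ((ho t ht).def hδpos)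
  have hA : ∀ z ≥ A₀, |tail F₁ (z - t) - e * tail F₁ z| ≤ δ * tail F₂ z := by
    intro z hz
    have h3 := hA₀ z hz
    rwa [Real.norm_eq_abs, Real.norm_eq_abs, abs_abs,
      abs_of_nonneg (tail_nonneg F₂ z)] at h3
  have hid : (e + 1) * δ * CB = ε / 4 := by
    rw [hδ]
    field_simp
  rw [← he] at hZ₀
  clear_value e CB δ
  -- step 4 : pointwise-in-x estimate
  filter_upwards [hCBev, hstrip, eventually_ge_atTop (A₀ + B)] with x hx1 hx2 hx3
  have hxB : A₀ ≤ x - B := by linarith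
  have hh := tail_nonneg (mconv F₁ F₂) x
  -- integrability of the basic integrands
  have hint₀ : Integrable (fun u => tail F₂ (x - u)) F₁ :=
    integrable_bdd (tail_meas F₂ x) (fun u => tail_abs_le_one F₂ _) F₁
  have hint₁ : Integrable (fun u => tail F₂ (x - t - u)) F₁ :=
    integrable_bdd (tail_meas F₂ (x - t)) (fun u => tail_abs_le_one F₂ _) F₁
  have hmY₀ : Measurable fun y => tail F₁ (max (x - y) (x - B)) := tail_max_meas F₁ x (x - B)
  have hintY₀ : Integrable (fun y => tail F₁ (max (x - y) (x - B))) F₂ :=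
    integrable_bdd hmY₀ (fun y => tail_abs_le_one F₁ _) F₂
  have hmY₁ : Measurable fun y => tail F₁ (max (x - y) (x - B) - t) := by
    have hmono : Monotone fun y => tail F₁ (max (x - y) (x - B) - t) := fun y₁ y₂ h =>
      tail_anti F₁ (by
        have : max (x - y₂) (x - B) ≤ max (x - y₁) (x - B) :=
          max_le_max (by linarith) le_rfl
        linarith)
    exact hmono.measurable
  have hintY₁ : Integrable (fun y => tail F₁ (max (x - y) (x - B) - t)) F₂ :=
    integrable_bdd hmY₁ (fun y => tail_abs_le_one F₁ _) F₂
  -- the five quantities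
  set W := ∫ u in Set.Iic (x - B), tail F₂ (x - u) ∂F₁ with hW
  set V := ∫ u in Set.Iic (x - t - B), tail F₂ (x - t - u) ∂F₁ with hV
  set V' := ∫ u in Set.Iic (x - t - B), tail F₂ (x - u) ∂F₁ with hV'
  set Y₀ := ∫ y, tail F₁ (max (x - y) (x - B)) ∂F₂ with hY₀
  set Y₁ := ∫ y, tail F₁ (max (x - t - y) (x - t - B)) ∂F₂ with hY₁
  set Strip := ∫ u in Set.Ioc (x - t - B) (x - B), tail F₂ (x - u) ∂F₁ with hStrip
  -- identities
  have hE1 : tail (mconv F₁ F₂) (x - t) = V + Y₁ := by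
    have h4 := tail_mconv_cut F₁ F₂ (x - t) (x - t - B)
    rw [h4, hV, hY₁]
  have hE2 : tail (mconv F₁ F₂) x = W + Y₀ := by
    have h4 := tail_mconv_cut F₁ F₂ x (x - B)
    rw [h4, hW, hY₀]
  have hE3 : W = V' + Strip := by
    rw [hW, hV', hStrip]
    have hset : Set.Iic (x - B) = Set.Iic (x - t - B) ∪ Set.Ioc (x - t - B) (x - B) :=
      (Set.Iic_union_Ioc_eq_Iic (by linarith)).symm
    rw [hset]
    apply MeasureTheory.setIntegral_union _ measurableSet_Ioc hint₀.integrableOn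
      hint₀.integrableOn
    apply Set.disjoint_left.2
    rintro u hu1 hu2
    simp only [Set.mem_Iic] at hu1
    simp only [Set.mem_Ioc] at hu2
    linarith [hu2.1]
  -- rewrite Y₁ in terms of shifted max
  have hY₁' : Y₁ = ∫ y, tail F₁ (max (x - y) (x - B) - t) ∂F₂ := by
    rw [hY₁]
    apply integral_congr_ae
    filter_upwards with y
    have harg : max (x - t - y) (x - t - B) = max (x - y) (x - B) - t := by
      rw [show x - t - y = (x - y) - t by ring, show x - t - B = (x - B) - t by ring,
        max_sub_sub_right]
    rw [harg]
  -- S1 bounds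
  have hS1a : V ≤ e * V' + ε / 4 * V' := by
    have hmono : V ≤ (e + ε / 4) * V' := by
      rw [hV, hV', ← MeasureTheory.integral_const_mul]
      apply MeasureTheory.setIntegral_mono_on hint₁.integrableOn
        (hint₀.const_mul _).integrableOn measurableSet_Iic
      intro u hu
      simp only [Set.mem_Iic] at hu
      have hz : Z₀ ≤ x - u := by linarith
      have h5 := (abs_le.1 (hZ₀ (x - u) hz)).2
      have harg : x - t - u = (x - u) - t := by ring
      rw [harg]
      linarith
    linarith [hmono]
  have hS1b : e * V' - ε / 4 * V' ≤ V := by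
    have hmono : (e - ε / 4) * V' ≤ V := by
      rw [hV, hV', ← MeasureTheory.integral_const_mul]
      apply MeasureTheory.setIntegral_mono_on (hint₀.const_mul _).integrableOn
        hint₁.integrableOn measurableSet_Iic
      intro u hu
      simp only [Set.mem_Iic] at hu
      have hz : Z₀ ≤ x - u := by linarith
      have h5 := (abs_le.1 (hZ₀ (x - u) hz)).1
      have harg : x - t - u = (x - u) - t := by ring
      rw [harg]
      linarith
    linarith [hmono]
  -- S2 bounds
  have hS2core : ∀ y : ℝ, |tail F₁ (max (x - y) (x - B) - t) - e * tail F₁ (max (x - y) (x - B))|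
      ≤ δ * tail F₂ (x - B) := by
    intro y
    have hge : x - B ≤ max (x - y) (x - B) := le_max_right _ _
    have h6 := hA (max (x - y) (x - B)) (by linarith)
    calc |tail F₁ (max (x - y) (x - B) - t) - e * tail F₁ (max (x - y) (x - B))|
        ≤ δ * tail F₂ (max (x - y) (x - B)) := h6
      _ ≤ δ * tail F₂ (x - B) := by
          apply mul_le_mul_of_nonneg_left (tail_anti F₂ hge) hδpos.le
  have hS2a : Y₁ ≤ e * Y₀ + δ * tail F₂ (x - B) := by
    rw [hY₁']
    have hle : ∀ y : ℝ, tail F₁ (max (x - y) (x - B) - t)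
        ≤ e * tail F₁ (max (x - y) (x - B)) + δ * tail F₂ (x - B) := fun y => by
      linarith [(abs_le.1 (hS2core y)).2]
    calc (∫ y, tail F₁ (max (x - y) (x - B) - t) ∂F₂)
        ≤ ∫ y, (e * tail F₁ (max (x - y) (x - B)) + δ * tail F₂ (x - B)) ∂F₂ :=
          integral_mono hintY₁ ((hintY₀.const_mul e).add (integrable_const _)) hle
      _ = e * Y₀ + δ * tail F₂ (x - B) := by
          rw [MeasureTheory.integral_add (hintY₀.const_mul e) (integrable_const _),
            MeasureTheory.integral_const_mul, MeasureTheory.integral_const, measureReal_def,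
            measure_univ, ENNReal.toReal_one, one_smul, hY₀]
  have hS2b : e * Y₀ - δ * tail F₂ (x - B) ≤ Y₁ := by
    rw [hY₁']
    have hle : ∀ y : ℝ, e * tail F₁ (max (x - y) (x - B)) - δ * tail F₂ (x - B)
        ≤ tail F₁ (max (x - y) (x - B) - t) := fun y => by
      linarith [(abs_le.1 (hS2core y)).1]
    calc e * Y₀ - δ * tail F₂ (x - B)
        = ∫ y, (e * tail F₁ (max (x - y) (x - B)) - δ * tail F₂ (x - B)) ∂F₂ := by
          rw [MeasureTheory.integral_sub (hintY₀.const_mul e) (integrable_const _),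
            MeasureTheory.integral_const_mul, MeasureTheory.integral_const, measureReal_def,
            measure_univ, ENNReal.toReal_one, one_smul, hY₀]
      _ ≤ ∫ y, tail F₁ (max (x - y) (x - B) - t) ∂F₂ :=
          integral_mono ((hintY₀.const_mul e).sub (integrable_const _)) hintY₁ hle
  -- S3 bounds
  have hS3a : 0 ≤ Strip := by
    rw [hStrip]
    apply MeasureTheory.setIntegral_nonneg measurableSet_Ioc
    intro u _
    exact tail_nonneg _ _
  have hS3b : Strip ≤ tail F₂ B * ((e - 1) * tail F₁ (x - B) + δ * tail F₂ (x - B)) := by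
    have hstep1 : Strip ≤ (tail F₁ (x - t - B) - tail F₁ (x - B)) * tail F₂ B := by
      have hc1 : Strip ≤ ∫ _u in Set.Ioc (x - t - B) (x - B), tail F₂ B ∂F₁ := by
        rw [hStrip]
        apply MeasureTheory.setIntegral_mono_on hint₀.integrableOn
          (integrableOn_const (measure_ne_top _ _)) measurableSet_Ioc
        intro u hu
        simp only [Set.mem_Ioc] at hu
        exact tail_anti F₂ (by linarith [hu.2])
      have hc2 : (∫ _u in Set.Ioc (x - t - B) (x - B), tail F₂ B ∂F₁)
          = (tail F₁ (x - t - B) - tail F₁ (x - B)) * tail F₂ B := by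
        rw [setIntegral_const, smul_eq_mul, measureReal_def,
          tail_diff F₁ (show x - t - B ≤ x - B by linarith)]
      linarith [hc1, hc2]
    have hstep2 : tail F₁ (x - t - B) - tail F₁ (x - B)
        ≤ (e - 1) * tail F₁ (x - B) + δ * tail F₂ (x - B) := by
      have h7 := (abs_le.1 (hA (x - B) hxB)).2
      have harg : x - t - B = (x - B) - t := by ring
      rw [harg]
      linarith
    calc Strip ≤ (tail F₁ (x - t - B) - tail F₁ (x - B)) * tail F₂ B := hstep1
      _ ≤ ((e - 1) * tail F₁ (x - B) + δ * tail F₂ (x - B)) * tail F₂ B :=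
          mul_le_mul_of_nonneg_right hstep2 (tail_nonneg _ _)
      _ = tail F₂ B * ((e - 1) * tail F₁ (x - B) + δ * tail F₂ (x - B)) := by ring
  -- auxiliary nonneg / comparison facts
  have hV'0 : 0 ≤ V' := by
    rw [hV']
    apply MeasureTheory.setIntegral_nonneg measurableSet_Iic
    intro u _
    exact tail_nonneg _ _
  have hY₀0 : 0 ≤ Y₀ := by
    rw [hY₀]
    apply integral_nonneg
    intro y
    exact tail_nonneg _ _
  clear_value W V V' Y₀ Y₁ Strip
  have hV'le : V' ≤ tail (mconv F₁ F₂) x := by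
    have : V' ≤ W := by linarith [hE3, hS3a]
    linarith [hE2, hY₀0]
  have heV'W : e * V' ≤ e * W := by
    apply mul_le_mul_of_nonneg_left _ hepos.le
    linarith [hE3, hS3a]
  have heE2 : e * tail (mconv F₁ F₂) x = e * W + e * Y₀ := by rw [hE2]; ring
  have heE3 : e * W = e * V' + e * Strip := by rw [hE3]; ring
  have hm1 : ε / 4 * V' ≤ ε / 4 * tail (mconv F₁ F₂) x :=
    mul_le_mul_of_nonneg_left hV'le (by positivity)
  -- δ-terms bound
  have hmδall : (e + 1) * (δ * tail F₂ (x - B)) ≤ ε / 4 * tail (mconv F₁ F₂) x := by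
    have hf₂h : tail F₂ x ≤ tail (mconv F₁ F₂) x := h_ge_f₂ F₁ F₂ hs₁ x
    have hed : (0:ℝ) ≤ (e + 1) * δ := mul_nonneg (by linarith) hδpos.le
    have h8' := mul_le_mul_of_nonneg_left hx1 hed
    calc (e + 1) * (δ * tail F₂ (x - B)) = (e + 1) * δ * tail F₂ (x - B) := by ring
      _ ≤ (e + 1) * δ * (CB * tail F₂ x) := h8'
      _ = ε / 4 * tail F₂ x := by
          rw [show (e + 1) * δ * (CB * tail F₂ x) = (e + 1) * δ * CB * tail F₂ x by ring, hid]
      _ ≤ ε / 4 * tail (mconv F₁ F₂) x :=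
          mul_le_mul_of_nonneg_left hf₂h (by positivity)
  have hδf0 : 0 ≤ δ * tail F₂ (x - B) := mul_nonneg hδpos.le (tail_nonneg _ _)
  have hδfe : δ * tail F₂ (x - B) ≤ e * (δ * tail F₂ (x - B)) := by
    have h14 := mul_nonneg (sub_nonneg.2 he1) hδf0
    linarith [h14]
  -- strip full bound
  have hstripfull : e * Strip ≤ ε / 4 * tail (mconv F₁ F₂) x + e * (δ * tail F₂ (x - B)) := by
    have h9 := mul_le_mul_of_nonneg_left hS3b hepos.le
    have h10 : e * (tail F₂ B * ((e - 1) * tail F₁ (x - B) + δ * tail F₂ (x - B)))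
        ≤ e * (e - 1) * (tail F₂ B * tail F₁ (x - B)) + e * (δ * tail F₂ (x - B)) := by
      have hf₂B1 := tail_le_one F₂ B
      have hkey : 0 ≤ e * δ * tail F₂ (x - B) * (1 - tail F₂ B) :=
        mul_nonneg (mul_nonneg (mul_nonneg hepos.le hδpos.le) (tail_nonneg F₂ (x - B)))
          (sub_nonneg.2 hf₂B1)
      linarith [hkey]
    linarith [hx2]
  -- assemble
  rw [abs_le]
  constructor
  · have hlow : e * tail (mconv F₁ F₂) x - ε / 4 * tail (mconv F₁ F₂) x
        - ε / 4 * tail (mconv F₁ F₂) x - (e + 1) * (δ * tail F₂ (x - B))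
        ≤ tail (mconv F₁ F₂) (x - t) := by
      have h11 : e * V' - ε / 4 * V' + e * Y₀ - δ * tail F₂ (x - B) ≤ V + Y₁ := by
        linarith [hS1b, hS2b]
      rw [hE1]
      have h12 : e * V' = e * tail (mconv F₁ F₂) x - e * Y₀ - e * Strip := by
        linarith [heE2, heE3]
      linarith [hm1, hstripfull, h11, h12]
    linarith [hmδall]
  · have h13 : V + Y₁ ≤ e * V' + ε / 4 * V' + e * Y₀ + δ * tail F₂ (x - B) := by
      linarith [hS1a, hS2a]
    have hδsingle : δ * tail F₂ (x - B) ≤ ε / 4 * tail (mconv F₁ F₂) x := by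
      linarith [hmδall, hδf0, hδfe]
    rw [hE1]
    linarith [heV'W, heE2, hm1, h13, hδsingle, hY₀0]

theorem stmt2 (F₁ F₂ : Measure ℝ) [IsProbabilityMeasure F₁] [IsProbabilityMeasure F₂]
    (hs₁ : F₁ (Set.Iio 0) = 0) (hs₂ : F₂ (Set.Iio 0) = 0)
    (γ : ℝ) (hγ : 0 ≤ γ) (hL₂ : MemL γ F₂)
    (hlim₁ : ∀ t > (0 : ℝ),
      Real.exp (γ * t) ≤ Filter.liminf (fun x => tail F₁ (x - t) / tail F₁ x) Filter.atTop)
    (hlim₂ : ∀ t > (0 : ℝ),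
      Real.exp (γ * t) ≤ Filter.liminf (fun x => tail F₂ (x - t) / tail F₂ x) Filter.atTop)
    (ho : ∀ t > (0 : ℝ),
      (fun x => |tail F₁ (x - t) - Real.exp (γ * t) * tail F₁ x|) =o[Filter.atTop]
        fun x => tail F₂ x) :
    MemL γ (mconv F₁ F₂) := by
  have hhpos : ∀ x, 0 < tail (mconv F₁ F₂) x := fun x =>
    lt_of_lt_of_le (tail_pos_of_memL F₂ hL₂ x) (h_ge_f₂ F₁ F₂ hs₁ x)
  have hmain : ∀ t > (0 : ℝ), Tendsto
      (fun x => tail (mconv F₁ F₂) (x - t) / tail (mconv F₁ F₂) x) atTop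
      (nhds (Real.exp (γ * t))) := by
    intro t ht
    rw [Metric.tendsto_atTop]
    intro ε hε
    obtain ⟨X, hX⟩ := eventually_atTop.1
      (main_est F₁ F₂ hs₁ hγ hL₂ hlim₁ ho ht (show (0:ℝ) < ε / 2 by positivity))
    refine ⟨X, fun x hx => ?_⟩
    have h1 := hX x hx
    have hpos := hhpos x
    rw [Real.dist_eq]
    have key : tail (mconv F₁ F₂) (x - t) / tail (mconv F₁ F₂) x - Real.exp (γ * t)
        = (tail (mconv F₁ F₂) (x - t) - Real.exp (γ * t) * tail (mconv F₁ F₂) x)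
          / tail (mconv F₁ F₂) x := by
      field_simp
    rw [key, abs_div, abs_of_pos hpos, div_lt_iff₀ hpos]
    calc |tail (mconv F₁ F₂) (x - t) - Real.exp (γ * t) * tail (mconv F₁ F₂) x|
        ≤ ε / 2 * tail (mconv F₁ F₂) x := h1
      _ < ε * tail (mconv F₁ F₂) x := by nlinarith
  intro t
  rcases lt_trichotomy t 0 with htneg | ht0 | htpos
  · have hs : 0 < -t := by linarith
    have Ts := hmain (-t) hs
    have hg : Tendsto (fun x : ℝ => x + -t) atTop atTop :=
      tendsto_atTop_add_const_right atTop (-t) tendsto_id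
    have hcomp := Ts.comp hg
    have hfun : ((fun z => tail (mconv F₁ F₂) (z - -t) / tail (mconv F₁ F₂) z) ∘
          fun x : ℝ => x + -t)
        = fun x => tail (mconv F₁ F₂) x / tail (mconv F₁ F₂) (x - t) := by
      funext x
      simp only [Function.comp_apply]
      have e1 : x + -t - -t = x := by ring
      have e2 : x + -t = x - t := by ring
      rw [e1, e2]
    rw [hfun] at hcomp
    have hinv := hcomp.inv₀ (Real.exp_ne_zero _)
    have hfun2 : (fun x => (tail (mconv F₁ F₂) x / tail (mconv F₁ F₂) (x - t))⁻¹)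
        = fun x => tail (mconv F₁ F₂) (x - t) / tail (mconv F₁ F₂) x := by
      funext x
      rw [inv_div]
    have hlim : (Real.exp (γ * -t))⁻¹ = Real.exp (γ * t) := by
      rw [← Real.exp_neg]
      ring_nf
    rw [hfun2, hlim] at hinv
    exact hinv
  · subst ht0
    have hfun : (fun x => tail (mconv F₁ F₂) (x - 0) / tail (mconv F₁ F₂) x)
        = fun _ => (1 : ℝ) := by
      funext x
      rw [sub_zero, div_self (hhpos x).ne']
    rw [hfun, mul_zero, Real.exp_zero]
    exact tendsto_const_nhds
  · exact hmain t htpos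
end

section
/- Let F be a distribution on [0,∞) such that F ∈ OS and F^{*2} ∈ L(γ) for some γ ≥ 0, and suppose that for all t > 0, liminf_{x→∞} F̄(x-t)/F̄(x) ≥ e^{γt}. Then F ∈ L(γ). -/
open MeasureTheory Filter Set Asymptotics

set_option linter.unusedSectionVars false
set_option linter.unusedTactic false
open scoped ENNReal

section A
variable (F : Measure ℝ) [IsProbabilityMeasure F]


lemma probG : IsProbabilityMeasure (mconv F F) := by
  unfold mconv
  exact Measure.isProbabilityMeasure_map (by fun_prop)

lemma mconv_Ioi_s6 (x : ℝ) : mconv F F (Set.Ioi x) = ∫⁻ y, F (Set.Ioi (x - y)) ∂F := by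
  unfold mconv
  rw [Measure.map_apply (by fun_prop) measurableSet_Ioi,
    Measure.prod_apply (by exact measurable_add measurableSet_Ioi)]
  congr 1
  ext u
  congr 1
  ext y
  simp [sub_lt_iff_lt_add']

lemma tail_mono : Monotone (fun y : ℝ => F (Set.Ioi (z - y))) := by
  intro a b hab
  apply measure_mono
  intro u hu
  simp only [mem_Ioi] at *
  linarith

lemma meas_tail (z : ℝ) : Measurable (fun y : ℝ => F (Set.Ioi (z - y))) :=
  (tail_mono F).measurable

-- swap lemma
lemma swap_tail (a b : ℝ) :
    ∫⁻ y in Set.Ioi a, F (Set.Ioi (b - y)) ∂F = ∫⁻ u, F (Set.Ioi (max a (b - u))) ∂F := by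
  have hS : MeasurableSet {p : ℝ × ℝ | a < p.2 ∧ b < p.1 + p.2} := by
    apply MeasurableSet.inter
    · exact measurable_snd measurableSet_Ioi
    · exact (measurable_add) measurableSet_Ioi
  have h1 : (F.prod F) {p : ℝ × ℝ | a < p.2 ∧ b < p.1 + p.2}
      = ∫⁻ u, F (Set.Ioi (max a (b - u))) ∂F := by
    rw [Measure.prod_apply hS]
    congr 1
    ext u
    congr 1
    ext y
    simp [max_lt_iff, sub_lt_iff_lt_add']
  have h2 : (F.prod F) {p : ℝ × ℝ | a < p.2 ∧ b < p.1 + p.2}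
      = ∫⁻ y in Set.Ioi a, F (Set.Ioi (b - y)) ∂F := by
    rw [← Measure.prod_swap, Measure.map_apply measurable_swap hS]
    have : (Prod.swap ⁻¹' {p : ℝ × ℝ | a < p.2 ∧ b < p.1 + p.2})
        = {p : ℝ × ℝ | a < p.1 ∧ b < p.2 + p.1} := by
      ext p; simp [Prod.swap]
    rw [this]
    rw [Measure.prod_apply (by
      apply MeasurableSet.inter
      · exact measurable_fst measurableSet_Ioi
      · exact (measurable_snd.add measurable_fst) measurableSet_Ioi)]
    rw [← lintegral_indicator measurableSet_Ioi]
    congr 1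
    ext u
    by_cases h : a < u
    · rw [Set.indicator_of_mem (by exact h)]
      congr 1
      ext y
      simp only [mem_preimage, mem_setOf_eq, mem_Ioi]
      constructor
      · rintro ⟨_, h2⟩; linarith
      · intro h2; exact ⟨h, by linarith⟩
    · rw [Set.indicator_of_notMem (by exact h)]
      have : {y | a < u ∧ b < y + u} = (∅ : Set ℝ) := by
        ext y; simp only [mem_setOf_eq, mem_empty_iff_false, iff_false]; tauto
      simp [this]
      
  rw [← h1, ← h2]


-- helper: reals to ENNReal
lemma ofReal_mul_le {μ ν : Measure ℝ} [IsFiniteMeasure μ] [IsFiniteMeasure ν] {s t : Set ℝ}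
    {c : ℝ} (h : c * (μ s).toReal ≤ (ν t).toReal) : ENNReal.ofReal c * μ s ≤ ν t := by
  rcases le_or_gt c 0 with hc | hc
  · simp [ENNReal.ofReal_eq_zero.2 hc]
  · calc ENNReal.ofReal c * μ s = ENNReal.ofReal (c * (μ s).toReal) := by
          rw [ENNReal.ofReal_mul hc.le, ENNReal.ofReal_toReal (measure_ne_top μ s)]
        _ ≤ ENNReal.ofReal ((ν t).toReal) := ENNReal.ofReal_le_ofReal h
        _ = ν t := ENNReal.ofReal_toReal (measure_ne_top ν t)

lemma toReal_pos_iff' {μ : Measure ℝ} [IsFiniteMeasure μ] {s : Set ℝ} (h : μ s ≠ 0) :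
    0 < (μ s).toReal := ENNReal.toReal_pos h (measure_ne_top μ s)

variable (γ : ℝ) (hγ : 0 ≤ γ)
variable (hlim : ∀ t > (0 : ℝ),
      Real.exp (γ * t) ≤ Filter.liminf (fun x => tail F (x - t) / tail F x) Filter.atTop)

include hlim in
lemma tail_ne_zero : ∀ x : ℝ, F (Set.Ioi x) ≠ 0 := by
  intro x hx
  have hz : ∀ y ≥ x, tail F y = 0 := by
    intro y hy
    have : F (Set.Ioi y) = 0 := by
      refine measure_mono_null ?_ hx
      exact Ioi_subset_Ioi hy
    simp [tail, this]
  have hev : (fun z => tail F (z - 1) / tail F z) =ᶠ[atTop] (fun _ => (0:ℝ)) := by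
    filter_upwards [eventually_ge_atTop (x + 1)] with z hz1
    rw [hz (z-1) (by linarith)]
    simp
  have h0 : Filter.liminf (fun z => tail F (z - 1) / tail F z) Filter.atTop = 0 := by
    rw [Filter.liminf_congr hev]
    simp
  have := hlim 1 one_pos
  rw [h0] at this
  linarith [Real.exp_pos (γ * 1)]

include hlim in
lemma tail_pos : ∀ x : ℝ, 0 < tail F x := fun x => toReal_pos_iff' (tail_ne_zero F γ hlim x)

-- eventual lower bound, ENNReal form
include hlim in
lemma ev_lower (t : ℝ) (ht : 0 < t) (ε : ℝ) (hε : 0 < ε) :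
    ∀ᶠ x in atTop, ENNReal.ofReal (Real.exp (γ * t) - ε) * F (Set.Ioi x) ≤ F (Set.Ioi (x - t)) := by
  have hb : Filter.IsBoundedUnder (· ≥ ·) Filter.atTop (fun x => tail F (x - t) / tail F x) :=
    Filter.isBoundedUnder_of ⟨0, fun x => div_nonneg ENNReal.toReal_nonneg ENNReal.toReal_nonneg⟩
  have h := Filter.eventually_lt_of_lt_liminf
    (lt_of_lt_of_le (sub_lt_self _ hε) (hlim t ht)) hb
  filter_upwards [h] with x hx
  apply ofReal_mul_le
  have hp := tail_pos F γ hlim x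
  rw [lt_div_iff₀ hp] at hx
  calc (Real.exp (γ*t) - ε) * (F (Set.Ioi x)).toReal = (Real.exp (γ*t) - ε) * tail F x := rfl
    _ ≤ tail F (x - t) := hx.le
    _ = (F (Set.Ioi (x-t))).toReal := rfl

end A

section B
variable (F : Measure ℝ) [IsProbabilityMeasure F]

lemma le_ofReal_mul {μ ν : Measure ℝ} [IsFiniteMeasure μ] [IsFiniteMeasure ν] {s t : Set ℝ}
    {c : ℝ} (hc : 0 ≤ c) (h : (ν t).toReal ≤ c * (μ s).toReal) : ν t ≤ ENNReal.ofReal c * μ s := by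
  calc ν t = ENNReal.ofReal ((ν t).toReal) := (ENNReal.ofReal_toReal (measure_ne_top ν t)).symm
    _ ≤ ENNReal.ofReal (c * (μ s).toReal) := ENNReal.ofReal_le_ofReal h
    _ = ENNReal.ofReal c * μ s := by
        rw [ENNReal.ofReal_mul hc, ENNReal.ofReal_toReal (measure_ne_top μ s)]

variable (hs : F (Set.Iio 0) = 0)

include hs in
lemma G_ge_F (x : ℝ) : F (Set.Ioi x) ≤ mconv F F (Set.Ioi x) := by
  rw [mconv_Ioi_s6]
  have hae : ∀ᵐ y ∂F, (0:ℝ) ≤ y := by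
    rw [ae_iff]
    refine measure_mono_null ?_ hs
    intro y hy
    simpa using hy
  calc F (Set.Ioi x) = ∫⁻ _, F (Set.Ioi x) ∂F := by simp
    _ ≤ ∫⁻ y, F (Set.Ioi (x - y)) ∂F := by
        refine lintegral_mono_ae ?_
        filter_upwards [hae] with y hy
        exact measure_mono (Ioi_subset_Ioi (by linarith))

end B


section C
variable (F : Measure ℝ) [IsProbabilityMeasure F]
variable (γ : ℝ)
variable (hlim : ∀ t > (0 : ℝ),
      Real.exp (γ * t) ≤ Filter.liminf (fun x => tail F (x - t) / tail F x) Filter.atTop)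
variable (hL2 : MemL γ (mconv F F)) (hOS : MemOS F) (hs : F (Set.Iio 0) = 0)

include hlim hs in
lemma tail_G_pos : ∀ x : ℝ, 0 < tail (mconv F F) x := by
  intro x
  haveI := probG F
  have h1 := tail_pos F γ hlim x
  have h2 := G_ge_F F hs x
  unfold tail at *
  have := ENNReal.toReal_mono (measure_ne_top _ _) h2
  linarith

include hlim hL2 hs in
lemma ev_upperG (s : ℝ) (ε : ℝ) (hε : 0 < ε) :
    ∀ᶠ x in atTop, mconv F F (Set.Ioi (x - s)) ≤
      ENNReal.ofReal ((1 + ε) * Real.exp (γ * s)) * mconv F F (Set.Ioi x) := by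
  haveI := probG F
  have h := hL2 s
  have h2 := (h.eventually (gt_mem_nhds (by
    have := Real.exp_pos (γ * s); nlinarith : Real.exp (γ*s) < (1+ε) * Real.exp (γ*s))))
  filter_upwards [h2] with x hx
  refine le_ofReal_mul (by positivity) ?_
  have hGpos : 0 < tail (mconv F F) x := tail_G_pos F γ hlim hs x
  rw [div_lt_iff₀ hGpos] at hx
  exact hx.le

include hOS hlim in
lemma OS_bound : ∃ C : ℝ, 1 ≤ C ∧ ∀ᶠ x in atTop,
    tail (mconv F F) x ≤ C * tail F x ∧
    mconv F F (Set.Ioi x) ≤ ENNReal.ofReal C * F (Set.Ioi x) := by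
  obtain ⟨b, hb⟩ := hOS
  rw [Filter.eventually_map] at hb
  refine ⟨max b 1, le_max_right _ _, ?_⟩
  haveI := probG F
  filter_upwards [hb] with x hx
  have hp := tail_pos F γ hlim x
  have hr : tail (mconv F F) x ≤ max b 1 * tail F x := by
    rw [div_le_iff₀ hp] at hx
    calc tail (mconv F F) x ≤ b * tail F x := hx
      _ ≤ max b 1 * tail F x := by
          have : b ≤ max b 1 := le_max_left _ _
          nlinarith
  exact ⟨hr, le_ofReal_mul (by positivity) hr⟩

end C

section D
variable (F : Measure ℝ) [IsProbabilityMeasure F]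
variable (γ : ℝ) (hγ : 0 ≤ γ)
variable (hlim : ∀ t > (0 : ℝ),
      Real.exp (γ * t) ≤ Filter.liminf (fun x => tail F (x - t) / tail F x) Filter.atTop)
variable (hOS : MemOS F)

include hγ hlim hOS in
lemma claimH : ∃ C : ℝ, 1 ≤ C ∧
    (∀ᶠ x in atTop, tail (mconv F F) x ≤ C * tail F x ∧
      mconv F F (Set.Ioi x) ≤ ENNReal.ofReal C * F (Set.Ioi x)) ∧
    ∀ K : ℕ, ∑ k ∈ Finset.range K,
      Real.exp (γ * k) * (F (Set.Ioc (k:ℝ) (k+1))).toReal ≤ C + 1 := by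
  obtain ⟨C, hC1, hC⟩ := OS_bound F γ hlim hOS
  refine ⟨C, hC1, hC, ?_⟩
  intro K
  set ε : ℝ := 1/(K+1) with hεdef
  have hε : 0 < ε := by positivity
  have hε1 : ε ≤ 1 := by
    rw [hεdef, div_le_one (by positivity)]
    linarith [Nat.cast_nonneg (α := ℝ) K]
  -- eventual bounds for each k < K
  have hev : ∀ᶠ x in atTop, ∀ k ∈ Finset.range K,
      ENNReal.ofReal (Real.exp (γ * k) - ε) * F (Set.Ioi x) ≤ F (Set.Ioi (x - k)) := by
    rw [Filter.eventually_all_finset]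
    intro k hk
    rcases Nat.eq_zero_or_pos k with rfl | hkpos
    · filter_upwards with x
      simp only [Nat.cast_zero, mul_zero, Real.exp_zero, sub_zero]
      calc ENNReal.ofReal (1 - ε) * F (Set.Ioi x) ≤ 1 * F (Set.Ioi x) := by
            gcongr
            exact ENNReal.ofReal_le_one.2 (by linarith)
        _ = F (Set.Ioi x) := one_mul _
    · exact ev_lower F γ hlim k (by exact_mod_cast hkpos) ε hε
  obtain ⟨x, hx, hxC⟩ := (hev.and hC).exists
  -- main chain in ENNReal
  have key : (∑ k ∈ Finset.range K, ENNReal.ofReal (Real.exp (γ * k) - ε)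
      * F (Set.Ioc (k:ℝ) (k+1))) * F (Set.Ioi x) ≤ ENNReal.ofReal C * F (Set.Ioi x) := by
    have h1 : ∀ k ∈ Finset.range K,
        ENNReal.ofReal (Real.exp (γ * k) - ε) * F (Set.Ioc (k:ℝ) (k+1)) * F (Set.Ioi x)
          ≤ ∫⁻ y in Set.Ioc (k:ℝ) (k+1), F (Set.Ioi (x - y)) ∂F := by
      intro k hk
      have hpt : ∀ y ∈ Set.Ioc (k:ℝ) (k+1),
          ENNReal.ofReal (Real.exp (γ * k) - ε) * F (Set.Ioi x) ≤ F (Set.Ioi (x - y)) := by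
        intro y hy
        refine le_trans (hx k hk) (measure_mono (Ioi_subset_Ioi (by
          have := hy.1; linarith)))
      calc ENNReal.ofReal (Real.exp (γ * k) - ε) * F (Set.Ioc (k:ℝ) (k+1)) * F (Set.Ioi x)
          = ∫⁻ _ in Set.Ioc (k:ℝ) (k+1), ENNReal.ofReal (Real.exp (γ * k) - ε) * F (Set.Ioi x) ∂F := by
            rw [setLIntegral_const]; ring
        _ ≤ ∫⁻ y in Set.Ioc (k:ℝ) (k+1), F (Set.Ioi (x - y)) ∂F :=
            setLIntegral_mono (meas_tail F x) hpt
    calc (∑ k ∈ Finset.range K, ENNReal.ofReal (Real.exp (γ * k) - ε)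
          * F (Set.Ioc (k:ℝ) (k+1))) * F (Set.Ioi x)
        = ∑ k ∈ Finset.range K, ENNReal.ofReal (Real.exp (γ * k) - ε)
          * F (Set.Ioc (k:ℝ) (k+1)) * F (Set.Ioi x) := Finset.sum_mul _ _ _
      _ ≤ ∑ k ∈ Finset.range K, ∫⁻ y in Set.Ioc (k:ℝ) (k+1), F (Set.Ioi (x - y)) ∂F :=
          Finset.sum_le_sum h1
      _ = ∫⁻ y in ⋃ k ∈ Finset.range K, Set.Ioc (k:ℝ) (k+1), F (Set.Ioi (x - y)) ∂F := by
          rw [lintegral_biUnion_finset ?_ (fun _ _ => measurableSet_Ioc) _]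
          intro i hi j hj hij
          simp only [Function.onFun]
          apply Set.Ioc_disjoint_Ioc.2
          rcases lt_or_gt_of_ne hij with h | h
          · calc min ((i:ℝ)+1) ((j:ℝ)+1) ≤ (i:ℝ)+1 := min_le_left _ _
              _ ≤ (j:ℝ) := by exact_mod_cast Nat.succ_le_of_lt h
              _ ≤ max (i:ℝ) (j:ℝ) := le_max_right _ _
          · calc min ((i:ℝ)+1) ((j:ℝ)+1) ≤ (j:ℝ)+1 := min_le_right _ _
              _ ≤ (i:ℝ) := by exact_mod_cast Nat.succ_le_of_lt h
              _ ≤ max (i:ℝ) (j:ℝ) := le_max_left _ _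
      _ ≤ ∫⁻ y, F (Set.Ioi (x - y)) ∂F := setLIntegral_le_lintegral _ _
      _ = mconv F F (Set.Ioi x) := (mconv_Ioi_s6 F x).symm
      _ ≤ ENNReal.ofReal C * F (Set.Ioi x) := hxC.2
  -- cancel F (Ioi x)
  have hFx0 : F (Set.Ioi x) ≠ 0 := tail_ne_zero F γ hlim x
  have hFxt : F (Set.Ioi x) ≠ ⊤ := measure_ne_top _ _
  have key2 : (∑ k ∈ Finset.range K, ENNReal.ofReal (Real.exp (γ * k) - ε)
      * F (Set.Ioc (k:ℝ) (k+1))) ≤ ENNReal.ofReal C :=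
    (ENNReal.mul_le_mul_iff_left hFx0 hFxt).1 key
  -- to reals
  have hterm : ∀ k ∈ Finset.range K, (ENNReal.ofReal (Real.exp (γ * k) - ε)
      * F (Set.Ioc (k:ℝ) (k+1))).toReal
      = (Real.exp (γ * k) - ε) * (F (Set.Ioc (k:ℝ) (k+1))).toReal := by
    intro k hk
    rw [ENNReal.toReal_mul, ENNReal.toReal_ofReal]
    have : (1:ℝ) ≤ Real.exp (γ * k) := Real.one_le_exp (by positivity)
    linarith
  have key3 : ∑ k ∈ Finset.range K, (Real.exp (γ * k) - ε)
      * (F (Set.Ioc (k:ℝ) (k+1))).toReal ≤ C := by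
    have := ENNReal.toReal_mono (by simp) key2
    rw [ENNReal.toReal_sum (fun k hk => by
      exact ENNReal.mul_ne_top ENNReal.ofReal_ne_top (measure_ne_top _ _))] at this
    rw [ENNReal.toReal_ofReal (by linarith)] at this
    calc ∑ k ∈ Finset.range K, (Real.exp (γ * k) - ε) * (F (Set.Ioc (k:ℝ) (k+1))).toReal
        = ∑ k ∈ Finset.range K, (ENNReal.ofReal (Real.exp (γ * k) - ε)
          * F (Set.Ioc (k:ℝ) (k+1))).toReal := by
          exact (Finset.sum_congr rfl hterm).symm
      _ ≤ C := this
  have hFle : ∀ k ∈ Finset.range K, (F (Set.Ioc (k:ℝ) (k+1))).toReal ≤ 1 := by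
    intro k hk
    have := prob_le_one (μ := F) (s := Set.Ioc (k:ℝ) (k+1))
    calc (F (Set.Ioc (k:ℝ) (k+1))).toReal ≤ (1:ℝ≥0∞).toReal := by
          apply ENNReal.toReal_mono (by simp) this
      _ = 1 := by simp
  calc ∑ k ∈ Finset.range K, Real.exp (γ * k) * (F (Set.Ioc (k:ℝ) (k+1))).toReal
      = ∑ k ∈ Finset.range K, ((Real.exp (γ * k) - ε) * (F (Set.Ioc (k:ℝ) (k+1))).toReal
        + ε * (F (Set.Ioc (k:ℝ) (k+1))).toReal) := by
        apply Finset.sum_congr rfl; intro k hk; ring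
    _ = (∑ k ∈ Finset.range K, (Real.exp (γ * k) - ε) * (F (Set.Ioc (k:ℝ) (k+1))).toReal)
        + (∑ k ∈ Finset.range K, ε * (F (Set.Ioc (k:ℝ) (k+1))).toReal) := Finset.sum_add_distrib
    _ ≤ C + (∑ k ∈ Finset.range K, ε * 1) :=
        add_le_add key3 (Finset.sum_le_sum (fun k hk =>
          mul_le_mul_of_nonneg_left (hFle k hk) hε.le))
    _ ≤ C + 1 := by
        simp only [mul_one, Finset.sum_const, Finset.card_range, nsmul_eq_mul]
        have : (K:ℝ) * ε ≤ 1 := by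
          rw [hεdef]
          rw [mul_one_div, div_le_one (by positivity)]
          linarith
        linarith

end D

noncomputable def nuM (F : Measure ℝ) (γ : ℝ) : Measure ℝ :=
  F.withDensity (fun y => ENNReal.ofReal (Real.exp (γ * y)))

section E
variable (F : Measure ℝ) [IsProbabilityMeasure F]
variable (γ : ℝ) (hγ : 0 ≤ γ)
variable (hlim : ∀ t > (0 : ℝ),
      Real.exp (γ * t) ≤ Filter.liminf (fun x => tail F (x - t) / tail F x) Filter.atTop)
variable (hOS : MemOS F)

include hγ in
lemma nuM_Ioi_ge (c : ℝ) :
    ENNReal.ofReal (Real.exp (γ * c)) * F (Set.Ioi c) ≤ nuM F γ (Set.Ioi c) := by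
  rw [nuM, withDensity_apply _ measurableSet_Ioi]
  calc ENNReal.ofReal (Real.exp (γ * c)) * F (Set.Ioi c)
      = ∫⁻ _ in Set.Ioi c, ENNReal.ofReal (Real.exp (γ * c)) ∂F := by rw [setLIntegral_const]
    _ ≤ ∫⁻ y in Set.Ioi c, ENNReal.ofReal (Real.exp (γ * y)) ∂F := by
        refine setLIntegral_mono' measurableSet_Ioi (fun y hy => ?_)
        exact ENNReal.ofReal_le_ofReal (Real.exp_le_exp.2 (by
          have : c < y := hy
          nlinarith))

include hγ in
lemma F_Ioi_le_nuM (c : ℝ) :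
    F (Set.Ioi c) ≤ ENNReal.ofReal (Real.exp (-(γ * c))) * nuM F γ (Set.Ioi c) := by
  have h1 : (ENNReal.ofReal (Real.exp (-(γ * c)))) * ENNReal.ofReal (Real.exp (γ * c)) = 1 := by
    rw [← ENNReal.ofReal_mul (Real.exp_nonneg _)]
    · rw [← Real.exp_add]
      simp
  calc F (Set.Ioi c) = (ENNReal.ofReal (Real.exp (-(γ * c))) * ENNReal.ofReal (Real.exp (γ * c)))
        * F (Set.Ioi c) := by rw [h1, one_mul]
    _ = ENNReal.ofReal (Real.exp (-(γ * c))) * (ENNReal.ofReal (Real.exp (γ * c)) * F (Set.Ioi c)) := by ring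
    _ ≤ ENNReal.ofReal (Real.exp (-(γ * c))) * nuM F γ (Set.Ioi c) := by
        gcongr
        exact nuM_Ioi_ge F γ hγ c

include hγ hlim hOS in
lemma nuM_finite : nuM F γ Set.univ ≠ ⊤ := by
  obtain ⟨C, hC1, _, hK⟩ := claimH F γ hγ hlim hOS
  have h1 : nuM F γ (Set.Iic 0) ≤ 1 := by
    rw [nuM, withDensity_apply _ measurableSet_Iic]
    calc ∫⁻ y in Set.Iic 0, ENNReal.ofReal (Real.exp (γ * y)) ∂F
        ≤ ∫⁻ _ in Set.Iic 0, 1 ∂F := by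
          refine setLIntegral_mono' measurableSet_Iic (fun y hy => ?_)
          refine ENNReal.ofReal_le_one.2 (Real.exp_le_one_iff.2 ?_)
          have : y ≤ 0 := hy
          nlinarith
      _ = F (Set.Iic 0) := by rw [setLIntegral_const, one_mul]
      _ ≤ 1 := prob_le_one
  have hIk : ∀ k : ℕ, nuM F γ (Set.Ioc (k:ℝ) (k+1))
      ≤ ENNReal.ofReal (Real.exp γ) * (ENNReal.ofReal (Real.exp (γ * k) * (F (Set.Ioc (k:ℝ) (k+1))).toReal)) := by
    intro k
    rw [nuM, withDensity_apply _ measurableSet_Ioc]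
    calc ∫⁻ y in Set.Ioc (k:ℝ) (k+1), ENNReal.ofReal (Real.exp (γ * y)) ∂F
        ≤ ∫⁻ _ in Set.Ioc (k:ℝ) (k+1), ENNReal.ofReal (Real.exp (γ * (k+1))) ∂F := by
          refine setLIntegral_mono' measurableSet_Ioc (fun y hy => ?_)
          refine ENNReal.ofReal_le_ofReal (Real.exp_le_exp.2 ?_)
          have : y ≤ (k:ℝ)+1 := hy.2
          nlinarith
      _ = ENNReal.ofReal (Real.exp (γ * (k+1))) * F (Set.Ioc (k:ℝ) (k+1)) := setLIntegral_const _ _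
      _ = ENNReal.ofReal (Real.exp γ) * (ENNReal.ofReal (Real.exp (γ * k) * (F (Set.Ioc (k:ℝ) (k+1))).toReal)) := by
          have hsplit : Real.exp (γ * ((k:ℝ)+1)) = Real.exp γ * Real.exp (γ * k) := by
            rw [← Real.exp_add]
            ring_nf
          rw [hsplit, ENNReal.ofReal_mul (Real.exp_nonneg _), mul_assoc,
            ENNReal.ofReal_mul (Real.exp_nonneg _), ENNReal.ofReal_toReal (measure_ne_top _ _)]
  have h2 : nuM F γ (Set.Ioi 0) ≤ ENNReal.ofReal (Real.exp γ) * ENNReal.ofReal (C + 1) := by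
    have hsub : Set.Ioi (0:ℝ) ⊆ ⋃ k : ℕ, Set.Ioc (k:ℝ) (k+1) := by
      intro y hy
      have hy0 : (0:ℝ) < y := hy
      refine Set.mem_iUnion.2 ⟨⌈y⌉₊ - 1, ?_⟩
      have h1 : 1 ≤ ⌈y⌉₊ := Nat.one_le_ceil_iff.2 hy0
      have hcast : ((⌈y⌉₊ - 1 : ℕ) : ℝ) = (⌈y⌉₊ : ℝ) - 1 := by
        push_cast [Nat.cast_sub h1]
        ring
      constructor
      · rw [hcast]
        have := Nat.ceil_lt_add_one hy0.le
        linarith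
      · rw [hcast]
        have := Nat.le_ceil y
        linarith
    calc nuM F γ (Set.Ioi 0) ≤ nuM F γ (⋃ k : ℕ, Set.Ioc (k:ℝ) (k+1)) := measure_mono hsub
      _ ≤ ∑' k : ℕ, nuM F γ (Set.Ioc (k:ℝ) (k+1)) := measure_iUnion_le _
      _ ≤ ENNReal.ofReal (Real.exp γ) * ENNReal.ofReal (C + 1) := by
          refine Summable.tsum_le_of_sum_le ENNReal.summable (fun s => ?_)
          obtain ⟨K, hsK⟩ := Finset.exists_nat_subset_range s
          calc ∑ k ∈ s, nuM F γ (Set.Ioc (k:ℝ) (k+1))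
              ≤ ∑ k ∈ Finset.range K, nuM F γ (Set.Ioc (k:ℝ) (k+1)) :=
                Finset.sum_le_sum_of_subset hsK
            _ ≤ ∑ k ∈ Finset.range K, ENNReal.ofReal (Real.exp γ)
                * (ENNReal.ofReal (Real.exp (γ * k) * (F (Set.Ioc (k:ℝ) (k+1))).toReal)) :=
                Finset.sum_le_sum (fun k _ => hIk k)
            _ = ENNReal.ofReal (Real.exp γ)
                * ∑ k ∈ Finset.range K, ENNReal.ofReal (Real.exp (γ * k) * (F (Set.Ioc (k:ℝ) (k+1))).toReal) := by
                rw [Finset.mul_sum]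
            _ ≤ ENNReal.ofReal (Real.exp γ) * ENNReal.ofReal (C + 1) := by
                gcongr
                rw [← ENNReal.ofReal_sum_of_nonneg (fun k _ => by positivity)]
                exact ENNReal.ofReal_le_ofReal (hK K)
  have huniv : nuM F γ Set.univ = nuM F γ (Set.Iic 0) + nuM F γ (Set.Ioi 0) := by
    rw [← measure_union (by simp [Set.disjoint_left]) measurableSet_Ioi, Set.Iic_union_Ioi]
  rw [huniv]
  exact ENNReal.add_ne_top.2 ⟨ne_top_of_le_ne_top (by simp) h1,
    ne_top_of_le_ne_top (by simp [ENNReal.mul_ne_top, ENNReal.ofReal_ne_top]) h2⟩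

include hγ hlim hOS in
lemma nuM_tail_small : ∀ ε : ℝ, 0 < ε → ∃ B : ℝ, 0 < B ∧ nuM F γ (Set.Ioi B) ≤ ENNReal.ofReal ε := by
  intro ε hε
  have hfin := nuM_finite F γ hγ hlim hOS
  have hinter : (⋂ n : ℕ, Set.Ioi (n:ℝ)) = ∅ := by
    ext y
    simp only [Set.mem_iInter, Set.mem_Ioi, Set.mem_empty_iff_false, iff_false, not_forall, not_lt]
    obtain ⟨n, hn⟩ := exists_nat_gt y
    exact ⟨n, hn.le⟩
  have htd := tendsto_measure_iInter_atTop (μ := nuM F γ) (s := fun n : ℕ => Set.Ioi (n:ℝ))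
    (fun n => measurableSet_Ioi.nullMeasurableSet)
    (fun n m hnm => Set.Ioi_subset_Ioi (by exact_mod_cast hnm))
    ⟨0, ne_top_of_le_ne_top hfin (measure_mono (Set.subset_univ _))⟩
  rw [hinter] at htd
  simp only [measure_empty] at htd
  have := htd.eventually_lt_const (ENNReal.ofReal_pos.2 hε)
  obtain ⟨n, hn1, hn2⟩ := ((this.and (eventually_ge_atTop 1)).exists)
  exact ⟨(n:ℝ), by exact_mod_cast hn2, hn1.le⟩

end E

section Fmain
variable (F : Measure ℝ) [IsProbabilityMeasure F]
variable (γ : ℝ) (hγ : 0 ≤ γ)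
variable (hlim : ∀ t > (0 : ℝ),
      Real.exp (γ * t) ≤ Filter.liminf (fun x => tail F (x - t) / tail F x) Filter.atTop)
variable (hOS : MemOS F) (hL2 : MemL γ (mconv F F)) (hs : F (Set.Iio 0) = 0)

include hγ hlim hOS hL2 hs in
set_option maxHeartbeats 2000000 in
lemma main_upper (t : ℝ) (ht : 0 < t) (δ : ℝ) (hδ : 0 < δ) :
    ∀ᶠ x in atTop, tail F (x - t) ≤ (Real.exp (γ * t) + δ) * tail F x := by
  by_contra hcon
  rw [Filter.not_eventually] at hcon
  set η := Real.exp (γ * t) + δ with hηdef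
  set δ₁ := δ * Real.exp (-(γ * t)) with hδ₁def
  have hδ₁ : 0 < δ₁ := by positivity
  have hηeq : η = (1 + δ₁) * Real.exp (γ * t) := by
    rw [hηdef, hδ₁def, add_mul, one_mul, mul_assoc, ← Real.exp_add]
    simp
  set c := (1 + δ₁) / (1 + δ₁ / 2) with hcdef
  have hc1 : 1 < c := by
    rw [hcdef, lt_div_iff₀ (by linarith)]
    linarith
  have hlogc : 0 < Real.log c := Real.log_pos hc1
  set w := min t (Real.log c / (γ + 1)) with hwdef
  have hw : 0 < w := lt_min ht (div_pos hlogc (by linarith))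
  have hwt : w ≤ t := min_le_left _ _
  have hwc : Real.exp (γ * w) ≤ c := by
    have h2 : w ≤ Real.log c / (γ + 1) := min_le_right _ _
    have h4 : γ * w ≤ Real.log c := by
      have h3 : γ * w ≤ γ * (Real.log c / (γ + 1)) := by nlinarith
      have h5 : γ * (Real.log c / (γ + 1)) ≤ Real.log c := by
        rw [mul_div_assoc', div_le_iff₀ (by linarith)]
        nlinarith
      linarith
    calc Real.exp (γ * w) ≤ Real.exp (Real.log c) := Real.exp_le_exp.2 h4
      _ = c := Real.exp_log (by linarith)
  set T := t + w with hTdef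
  have hT0 : 0 < T := by rw [hTdef]; linarith
  have hexpT : Real.exp (γ * T) = Real.exp (γ * t) * Real.exp (γ * w) := by
    rw [← Real.exp_add, hTdef]; ring_nf
  have hwin : (1 + δ₁ / 2) * Real.exp (γ * T) ≤ η := by
    rw [hηeq, hexpT]
    have h4 : (1 + δ₁ / 2) * Real.exp (γ * w) ≤ 1 + δ₁ := by
      calc (1 + δ₁ / 2) * Real.exp (γ * w) ≤ (1 + δ₁ / 2) * c := by nlinarith
        _ = 1 + δ₁ := by rw [hcdef]; field_simp
    nlinarith [Real.exp_pos (γ * t)]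
  clear_value η δ₁ c w T
  -- window with positive mass
  have hWex : ∃ k : ℕ, F (Set.Ioc ((k:ℝ) * w) (((k:ℝ) + 1) * w)) ≠ 0 := by
    by_contra hall
    push_neg at hall
    have hsub : Set.Ioi (0:ℝ) ⊆ ⋃ k : ℕ, Set.Ioc ((k:ℝ) * w) (((k:ℝ) + 1) * w) := by
      intro y hy
      have hy0 : (0:ℝ) < y := hy
      have hq : 0 < y / w := div_pos hy0 hw
      have h1 : 1 ≤ ⌈y / w⌉₊ := Nat.one_le_ceil_iff.2 hq
      refine Set.mem_iUnion.2 ⟨⌈y / w⌉₊ - 1, ?_⟩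
      have hcast : ((⌈y / w⌉₊ - 1 : ℕ) : ℝ) = (⌈y / w⌉₊ : ℝ) - 1 := by
        push_cast [h1]
        ring
      constructor
      · rw [hcast, ← lt_div_iff₀ hw]
        have h2 := Nat.ceil_lt_add_one hq.le
        linarith
      · rw [hcast]
        have h3 := Nat.le_ceil (y / w)
        rw [← div_le_iff₀ hw] 
        linarith
    have h0 : F (Set.Ioi 0) = 0 := by
      refine le_antisymm ?_ (by simp)
      calc F (Set.Ioi 0) ≤ ∑' k : ℕ, F (Set.Ioc ((k:ℝ) * w) (((k:ℝ) + 1) * w)) :=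
            le_trans (measure_mono hsub) (measure_iUnion_le _)
        _ = 0 := by simp [hall]
    exact tail_ne_zero F γ hlim 0 h0
  obtain ⟨k0, hk0⟩ := hWex
  set s0 := ((k0:ℝ) + 1) * w with hs0def
  set W := Set.Ioc (s0 - w) s0 with hWdef
  have hWeq : W = Set.Ioc ((k0:ℝ) * w) (((k0:ℝ) + 1) * w) := by
    rw [hWdef, hs0def]
    congr 1
    ring
  have hpW : F W ≠ 0 := by rw [hWeq]; exact hk0
  have hs0w : w ≤ s0 := by
    rw [hs0def]
    nlinarith [Nat.cast_nonneg (α := ℝ) k0]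
  have hs0pos : 0 < s0 := lt_of_lt_of_le hw hs0w
  clear_value s0 W
  -- constants
  obtain ⟨C, hC1, hCev, _⟩ := claimH F γ hγ hlim hOS
  have hpr : 0 < (F W).toReal := toReal_pos_iff' hpW
  set pr := (F W).toReal with hprdef
  set ε := min (1/2) (δ₁ * pr / (8 * C * (1 + Real.exp (γ * T)))) with hεdef
  have hε : 0 < ε := lt_min (by norm_num) (by positivity)
  have hε2 : ε ≤ 1/2 := min_le_left _ _
  have hεle : ε ≤ δ₁ * pr / (8 * C * (1 + Real.exp (γ * T))) := min_le_right _ _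
  clear_value pr ε
  obtain ⟨B, hB0, hBν⟩ := nuM_tail_small F γ hγ hlim hOS ε hε
  obtain ⟨X1, hX1⟩ := (Filter.eventually_atTop).1
    (ev_lower F γ hlim T hT0 (ε * Real.exp (γ * T)) (by positivity))
  have hc1eq : ∀ u ≥ X1, ENNReal.ofReal ((1 - ε) * Real.exp (γ * T)) * F (Set.Ioi u)
      ≤ F (Set.Ioi (u - T)) := by
    intro u hu
    have := hX1 u hu
    have heq : Real.exp (γ * T) - ε * Real.exp (γ * T) = (1 - ε) * Real.exp (γ * T) := by ring
    rwa [heq] at this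
  set M' := max (B + T) (X1 + T) with hM'def
  have hM'B : B ≤ M' - T := by
    have := le_max_left (B + T) (X1 + T)
    rw [hM'def]; linarith
  have hM'X1 : X1 + T ≤ M' := le_max_right _ _
  have hM'T : T ≤ M' := by
    have := le_max_left (B + T) (X1 + T)
    rw [hM'def]; linarith [hB0]
  clear_value M'
  -- eventual facts
  have hGT := ev_upperG F γ hlim hL2 hs T ε hε
  have hGM := ev_upperG F γ hlim hL2 hs M' 1 one_pos
  obtain ⟨Z0, hZ0⟩ := Filter.eventually_atTop.1 (hGT.and (hGM.and (hCev.and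
    ((eventually_ge_atTop (s0 + M')).and (eventually_ge_atTop (X1 + M' - T))))))
  -- frequent jump point
  obtain ⟨x0, hx0ge, hx0not⟩ := Filter.frequently_atTop.1 hcon Z0
  have hjump : η * tail F x0 < tail F (x0 - t) := not_le.1 hx0not
  have hjumpE : ENNReal.ofReal η * F (Set.Ioi x0) ≤ F (Set.Ioi (x0 - t)) :=
    ofReal_mul_le hjump.le
  set z := x0 + s0 with hzdef
  have hzZ : z ≥ Z0 := by rw [hzdef]; linarith
  clear_value z
  obtain ⟨hGTz, hGMz, hOSz, hz1, hz2⟩ := hZ0 z hzZ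
  set a := z - M' with hadef
  clear_value a
  -- measurability
  have hmT : Measurable (fun y : ℝ => F (Set.Ioi (z - T - y))) := by
    have := meas_tail F (z - T)
    simpa [sub_sub] using this
  have hm0 : Measurable (fun y : ℝ => F (Set.Ioi (z - y))) := meas_tail F z
  -- split of G-tails
  have hGsplit : ∀ v : ℝ, mconv F F (Set.Ioi v)
      = (∫⁻ y in Set.Iic a, F (Set.Ioi (v - y)) ∂F) + ∫⁻ y in Set.Ioi a, F (Set.Ioi (v - y)) ∂F := by
    intro v
    rw [mconv_Ioi_s6]
    rw [← lintegral_add_compl (fun y => F (Set.Ioi (v - y))) (measurableSet_Iic (a := a)) (μ := F)]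
    congr 1
    rw [Set.compl_Iic]
  -- ENNReal coefficients
  set c1M := ENNReal.ofReal ((1 - ε) * Real.exp (γ * T)) with hc1M
  set dM := ENNReal.ofReal ((δ₁ / 2) * Real.exp (γ * T)) with hdM
  clear_value c1M dM
  -- Piece A
  have hWsub : W ⊆ Set.Iic a := by
    intro y hy
    rw [hWdef] at hy
    have hy2 : y ≤ s0 := hy.2
    have : s0 ≤ a := by rw [hadef]; linarith
    exact Set.mem_Iic.2 (le_trans hy2 this)
  have hdecomp : ∀ g : ℝ → ℝ≥0∞, ∫⁻ y in Set.Iic a, g y ∂F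
      = (∫⁻ y in W, g y ∂F) + ∫⁻ y in Set.Iic a \ W, g y ∂F := by
    intro g
    rw [← lintegral_union (measurableSet_Iic.diff (by rw [hWdef]; exact measurableSet_Ioc))
      Set.disjoint_sdiff_right, Set.union_diff_cancel hWsub]
  have hptW : ∀ y ∈ W, (c1M + dM) * F (Set.Ioi (z - y)) ≤ F (Set.Ioi (z - T - y)) := by
    intro y hy
    rw [hWdef] at hy
    have hy1 : s0 - w < y := hy.1
    have hy2 : y ≤ s0 := hy.2
    have h1 : F (Set.Ioi (x0 - t)) ≤ F (Set.Ioi (z - T - y)) := by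
      refine measure_mono (Set.Ioi_subset_Ioi ?_)
      rw [hzdef, hTdef]; linarith
    have h2 : F (Set.Ioi (z - y)) ≤ F (Set.Ioi x0) := by
      refine measure_mono (Set.Ioi_subset_Ioi ?_)
      rw [hzdef]; linarith
    have h3 : c1M + dM ≤ ENNReal.ofReal η := by
      have hn1 : (0:ℝ) ≤ (1 - ε) * Real.exp (γ * T) :=
        mul_nonneg (by linarith) (Real.exp_nonneg _)
      have hn2 : (0:ℝ) ≤ (δ₁ / 2) * Real.exp (γ * T) :=
        mul_nonneg (by linarith) (Real.exp_nonneg _)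
      rw [hc1M, hdM, ← ENNReal.ofReal_add hn1 hn2]
      refine ENNReal.ofReal_le_ofReal ?_
      have h5 : (0:ℝ) ≤ ε * Real.exp (γ * T) :=
        mul_nonneg hε.le (Real.exp_nonneg _)
      have h6 : (1 - ε) * Real.exp (γ * T) + (δ₁ / 2) * Real.exp (γ * T)
          = (1 + δ₁ / 2) * Real.exp (γ * T) - ε * Real.exp (γ * T) := by ring
      linarith [hwin]
    calc (c1M + dM) * F (Set.Ioi (z - y)) ≤ ENNReal.ofReal η * F (Set.Ioi x0) :=
          mul_le_mul' h3 h2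
      _ ≤ F (Set.Ioi (x0 - t)) := hjumpE
      _ ≤ F (Set.Ioi (z - T - y)) := h1
  have hptD : ∀ y ∈ Set.Iic a \ W, c1M * F (Set.Ioi (z - y)) ≤ F (Set.Ioi (z - T - y)) := by
    intro y hy
    have hy1 : y ≤ a := hy.1.out
    have h := hc1eq (z - y) (by rw [hadef] at hy1; linarith)
    rwa [sub_right_comm] at h
  have hWlow : F (Set.Ioi z) * F W ≤ ∫⁻ y in W, F (Set.Ioi (z - y)) ∂F := by
    calc F (Set.Ioi z) * F W = ∫⁻ _ in W, F (Set.Ioi z) ∂F := (setLIntegral_const _ _).symm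
      _ ≤ ∫⁻ y in W, F (Set.Ioi (z - y)) ∂F := by
          refine setLIntegral_mono hm0 (fun y hy => ?_)
          rw [hWdef] at hy
          refine measure_mono (Set.Ioi_subset_Ioi ?_)
          have hy1 : s0 - w < y := hy.1
          have : 0 ≤ s0 - w := by linarith [hs0w]
          linarith
  have hA : c1M * (∫⁻ y in Set.Iic a, F (Set.Ioi (z - y)) ∂F)
      + dM * (F (Set.Ioi z) * F W) ≤ ∫⁻ y in Set.Iic a, F (Set.Ioi (z - T - y)) ∂F := by
    rw [hdecomp (fun y => F (Set.Ioi (z - y))), hdecomp (fun y => F (Set.Ioi (z - T - y)))]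
    have e1 : c1M * ((∫⁻ y in W, F (Set.Ioi (z - y)) ∂F) + ∫⁻ y in Set.Iic a \ W, F (Set.Ioi (z - y)) ∂F)
        + dM * (F (Set.Ioi z) * F W)
        = (c1M * (∫⁻ y in W, F (Set.Ioi (z - y)) ∂F) + dM * (F (Set.Ioi z) * F W))
          + c1M * ∫⁻ y in Set.Iic a \ W, F (Set.Ioi (z - y)) ∂F := by ring
    rw [e1]
    have h2 : c1M * (∫⁻ y in W, F (Set.Ioi (z - y)) ∂F) + dM * (F (Set.Ioi z) * F W)
        ≤ ∫⁻ y in W, F (Set.Ioi (z - T - y)) ∂F := by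
      calc c1M * (∫⁻ y in W, F (Set.Ioi (z - y)) ∂F) + dM * (F (Set.Ioi z) * F W)
          ≤ c1M * (∫⁻ y in W, F (Set.Ioi (z - y)) ∂F)
            + dM * (∫⁻ y in W, F (Set.Ioi (z - y)) ∂F) := by gcongr
        _ = (c1M + dM) * ∫⁻ y in W, F (Set.Ioi (z - y)) ∂F := by ring
        _ = ∫⁻ y in W, (c1M + dM) * F (Set.Ioi (z - y)) ∂F := (lintegral_const_mul _ hm0).symm
        _ ≤ ∫⁻ y in W, F (Set.Ioi (z - T - y)) ∂F := setLIntegral_mono hmT hptW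
    have h3 : c1M * (∫⁻ y in Set.Iic a \ W, F (Set.Ioi (z - y)) ∂F)
        ≤ ∫⁻ y in Set.Iic a \ W, F (Set.Ioi (z - T - y)) ∂F := by
      calc c1M * (∫⁻ y in Set.Iic a \ W, F (Set.Ioi (z - y)) ∂F)
          = ∫⁻ y in Set.Iic a \ W, c1M * F (Set.Ioi (z - y)) ∂F := (lintegral_const_mul _ hm0).symm
        _ ≤ ∫⁻ y in Set.Iic a \ W, F (Set.Ioi (z - T - y)) ∂F := setLIntegral_mono hmT hptD
    exact add_le_add h2 h3
  -- Piece B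
  have hmax0 : Measurable (fun u : ℝ => F (Set.Ioi (max a (z - u)))) := by
    have : Monotone (fun u : ℝ => F (Set.Ioi (max a (z - u)))) := by
      intro u v huv
      refine measure_mono (Set.Ioi_subset_Ioi ?_)
      exact max_le_max le_rfl (by linarith)
    exact this.measurable
  have hmaxT : Measurable (fun u : ℝ => F (Set.Ioi (max a (z - T - u)))) := by
    have : Monotone (fun u : ℝ => F (Set.Ioi (max a (z - T - u)))) := by
      intro u v huv
      refine measure_mono (Set.Ioi_subset_Ioi ?_)
      exact max_le_max le_rfl (by linarith)
    exact this.measurable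
  have hptB : ∀ u : ℝ, c1M * F (Set.Ioi (max a (z - u)))
      ≤ F (Set.Ioi (max a (z - T - u)))
        + (Set.Ioi (M' - T)).indicator (fun _ => ENNReal.ofReal (Real.exp (γ * T)) * F (Set.Ioi a)) u := by
    intro u
    rcases le_or_gt u (M' - T) with hu | hu
    · have hmax1 : max a (z - u) = z - u := max_eq_right (by rw [hadef]; linarith)
      have hmax2 : max a (z - T - u) = z - T - u := max_eq_right (by rw [hadef]; linarith)
      rw [hmax1, hmax2]
      have h := hc1eq (z - u) (by linarith [hz2])
      rw [sub_right_comm] at h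
      exact le_trans h le_self_add
    · have hind : (Set.Ioi (M' - T)).indicator
          (fun _ => ENNReal.ofReal (Real.exp (γ * T)) * F (Set.Ioi a)) u
          = ENNReal.ofReal (Real.exp (γ * T)) * F (Set.Ioi a) :=
        Set.indicator_of_mem hu _
      calc c1M * F (Set.Ioi (max a (z - u)))
          ≤ ENNReal.ofReal (Real.exp (γ * T)) * F (Set.Ioi a) := by
            refine mul_le_mul' ?_ (measure_mono (Set.Ioi_subset_Ioi (le_max_left _ _)))
            rw [hc1M]
            refine ENNReal.ofReal_le_ofReal ?_
            have h7 : (1 - ε) * Real.exp (γ * T) = Real.exp (γ * T) - ε * Real.exp (γ * T) := by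
              ring
            have h8 : (0:ℝ) ≤ ε * Real.exp (γ * T) := mul_nonneg hε.le (Real.exp_nonneg _)
            linarith
        _ ≤ F (Set.Ioi (max a (z - T - u))) + (Set.Ioi (M' - T)).indicator
            (fun _ => ENNReal.ofReal (Real.exp (γ * T)) * F (Set.Ioi a)) u := by
            rw [hind]
            exact le_add_self
  have hB : c1M * (∫⁻ y in Set.Ioi a, F (Set.Ioi (z - y)) ∂F)
      ≤ (∫⁻ y in Set.Ioi a, F (Set.Ioi (z - T - y)) ∂F)
        + ENNReal.ofReal (Real.exp (γ * T)) * F (Set.Ioi a) * F (Set.Ioi (M' - T)) := by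
    have hBrw0 : ∫⁻ y in Set.Ioi a, F (Set.Ioi (z - y)) ∂F
        = ∫⁻ u, F (Set.Ioi (max a (z - u))) ∂F := swap_tail F a z
    have hBrwT : ∫⁻ y in Set.Ioi a, F (Set.Ioi (z - T - y)) ∂F
        = ∫⁻ u, F (Set.Ioi (max a (z - T - u))) ∂F := by
      have := swap_tail F a (z - T)
      simpa [sub_sub] using this
    rw [hBrw0, hBrwT]
    calc c1M * ∫⁻ u, F (Set.Ioi (max a (z - u))) ∂F
        = ∫⁻ u, c1M * F (Set.Ioi (max a (z - u))) ∂F := (lintegral_const_mul _ hmax0).symm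
      _ ≤ ∫⁻ u, (F (Set.Ioi (max a (z - T - u)))
          + (Set.Ioi (M' - T)).indicator (fun _ => ENNReal.ofReal (Real.exp (γ * T)) * F (Set.Ioi a)) u) ∂F :=
          lintegral_mono (fun u => hptB u)
      _ = (∫⁻ u, F (Set.Ioi (max a (z - T - u))) ∂F)
          + ∫⁻ u, (Set.Ioi (M' - T)).indicator (fun _ => ENNReal.ofReal (Real.exp (γ * T)) * F (Set.Ioi a)) u ∂F :=
          lintegral_add_left hmaxT _
      _ = (∫⁻ u, F (Set.Ioi (max a (z - T - u))) ∂F)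
          + ENNReal.ofReal (Real.exp (γ * T)) * F (Set.Ioi a) * F (Set.Ioi (M' - T)) := by
          rw [lintegral_indicator measurableSet_Ioi, setLIntegral_const]
  -- error term bound
  have hE : ENNReal.ofReal (Real.exp (γ * T)) * F (Set.Ioi a) * F (Set.Ioi (M' - T))
      ≤ ENNReal.ofReal (2 * C * (Real.exp (γ * T) * Real.exp (γ * T)) * ε) * F (Set.Ioi z) := by
    have h1 : F (Set.Ioi a) ≤ ENNReal.ofReal (2 * Real.exp (γ * M') * C) * F (Set.Ioi z) := by
      calc F (Set.Ioi a) ≤ mconv F F (Set.Ioi a) := G_ge_F F hs a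
        _ ≤ ENNReal.ofReal ((1 + 1) * Real.exp (γ * M')) * mconv F F (Set.Ioi z) := hGMz
        _ ≤ ENNReal.ofReal ((1 + 1) * Real.exp (γ * M')) * (ENNReal.ofReal C * F (Set.Ioi z)) :=
            mul_le_mul' le_rfl hOSz.2
        _ = ENNReal.ofReal (2 * Real.exp (γ * M') * C) * F (Set.Ioi z) := by
            rw [← mul_assoc, ← ENNReal.ofReal_mul (by positivity)]
            norm_num
    have h2 : F (Set.Ioi (M' - T)) ≤ ENNReal.ofReal (Real.exp (-(γ * (M' - T))) * ε) := by
      calc F (Set.Ioi (M' - T))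
          ≤ ENNReal.ofReal (Real.exp (-(γ * (M' - T)))) * nuM F γ (Set.Ioi (M' - T)) :=
            F_Ioi_le_nuM F γ hγ (M' - T)
        _ ≤ ENNReal.ofReal (Real.exp (-(γ * (M' - T)))) * nuM F γ (Set.Ioi B) :=
            mul_le_mul' le_rfl (measure_mono (Set.Ioi_subset_Ioi hM'B))
        _ ≤ ENNReal.ofReal (Real.exp (-(γ * (M' - T)))) * ENNReal.ofReal ε :=
            mul_le_mul' le_rfl hBν
        _ = ENNReal.ofReal (Real.exp (-(γ * (M' - T))) * ε) := by
            rw [← ENNReal.ofReal_mul (Real.exp_nonneg _)]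
    calc ENNReal.ofReal (Real.exp (γ * T)) * F (Set.Ioi a) * F (Set.Ioi (M' - T))
        ≤ ENNReal.ofReal (Real.exp (γ * T))
          * (ENNReal.ofReal (2 * Real.exp (γ * M') * C) * F (Set.Ioi z))
          * ENNReal.ofReal (Real.exp (-(γ * (M' - T))) * ε) :=
          mul_le_mul' (mul_le_mul' le_rfl h1) h2
      _ = (ENNReal.ofReal (Real.exp (γ * T)) * ENNReal.ofReal (2 * Real.exp (γ * M') * C)
          * ENNReal.ofReal (Real.exp (-(γ * (M' - T))) * ε)) * F (Set.Ioi z) := by ring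
      _ = ENNReal.ofReal (2 * C * (Real.exp (γ * T) * Real.exp (γ * T)) * ε) * F (Set.Ioi z) := by
          have hC0 : (0:ℝ) < C := lt_of_lt_of_le one_pos hC1
          have n1 : (0:ℝ) ≤ 2 * Real.exp (γ * M') * C :=
            mul_nonneg (by positivity) hC0.le
          have e1 : Real.exp (γ * M') * Real.exp (-(γ * (M' - T))) = Real.exp (γ * T) := by
            rw [← Real.exp_add]
            congr 1
            ring
          rw [← ENNReal.ofReal_mul (Real.exp_nonneg _),
            ← ENNReal.ofReal_mul (mul_nonneg (Real.exp_nonneg _) n1)]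
          have : Real.exp (γ * T) * (2 * Real.exp (γ * M') * C) * (Real.exp (-(γ * (M' - T))) * ε)
              = 2 * C * (Real.exp (γ * T) * Real.exp (γ * T)) * ε := by
            linear_combination (2 * C * ε * Real.exp (γ * T)) * e1
          rw [this]
  -- assembly
  have hassemble : c1M * mconv F F (Set.Ioi z) + dM * (F (Set.Ioi z) * F W)
      ≤ ENNReal.ofReal ((1 + ε) * Real.exp (γ * T)) * mconv F F (Set.Ioi z)
        + ENNReal.ofReal (2 * C * (Real.exp (γ * T) * Real.exp (γ * T)) * ε) * F (Set.Ioi z) := by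
    calc c1M * mconv F F (Set.Ioi z) + dM * (F (Set.Ioi z) * F W)
        = (c1M * (∫⁻ y in Set.Iic a, F (Set.Ioi (z - y)) ∂F) + dM * (F (Set.Ioi z) * F W))
          + c1M * (∫⁻ y in Set.Ioi a, F (Set.Ioi (z - y)) ∂F) := by
          rw [hGsplit z]; ring
      _ ≤ (∫⁻ y in Set.Iic a, F (Set.Ioi (z - T - y)) ∂F)
          + ((∫⁻ y in Set.Ioi a, F (Set.Ioi (z - T - y)) ∂F)
            + ENNReal.ofReal (Real.exp (γ * T)) * F (Set.Ioi a) * F (Set.Ioi (M' - T))) :=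
          add_le_add hA hB
      _ = mconv F F (Set.Ioi (z - T))
          + ENNReal.ofReal (Real.exp (γ * T)) * F (Set.Ioi a) * F (Set.Ioi (M' - T)) := by
          rw [hGsplit (z - T)]; ring
      _ ≤ ENNReal.ofReal ((1 + ε) * Real.exp (γ * T)) * mconv F F (Set.Ioi z)
          + ENNReal.ofReal (2 * C * (Real.exp (γ * T) * Real.exp (γ * T)) * ε) * F (Set.Ioi z) :=
          add_le_add hGTz hE
  -- to reals
  haveI := probG F
  rw [hc1M, hdM] at hassemble
  have hfinG : mconv F F (Set.Ioi z) ≠ ⊤ := measure_ne_top _ _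
  have hfin1 : ENNReal.ofReal ((1 + ε) * Real.exp (γ * T)) * mconv F F (Set.Ioi z) ≠ ⊤ :=
    ENNReal.mul_ne_top ENNReal.ofReal_ne_top hfinG
  have hfin2 : ENNReal.ofReal (2 * C * (Real.exp (γ * T) * Real.exp (γ * T)) * ε) * F (Set.Ioi z) ≠ ⊤ :=
    ENNReal.mul_ne_top ENNReal.ofReal_ne_top (measure_ne_top _ _)
  have hfin3 : ENNReal.ofReal ((1 - ε) * Real.exp (γ * T)) * mconv F F (Set.Ioi z) ≠ ⊤ :=
    ENNReal.mul_ne_top ENNReal.ofReal_ne_top hfinG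
  have hfin4 : ENNReal.ofReal ((δ₁ / 2) * Real.exp (γ * T)) * (F (Set.Ioi z) * F W) ≠ ⊤ :=
    ENNReal.mul_ne_top ENNReal.ofReal_ne_top
      (ENNReal.mul_ne_top (measure_ne_top _ _) (measure_ne_top _ _))
  have h := ENNReal.toReal_mono (ENNReal.add_ne_top.2 ⟨hfin1, hfin2⟩) hassemble
  rw [ENNReal.toReal_add hfin3 hfin4, ENNReal.toReal_add hfin1 hfin2,
    ENNReal.toReal_mul, ENNReal.toReal_mul, ENNReal.toReal_mul, ENNReal.toReal_mul,
    ENNReal.toReal_mul,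
    ENNReal.toReal_ofReal (mul_nonneg (by linarith) (Real.exp_nonneg _)),
    ENNReal.toReal_ofReal (mul_nonneg (by linarith) (Real.exp_nonneg _)),
    ENNReal.toReal_ofReal (mul_nonneg (by linarith) (Real.exp_nonneg _)),
    ENNReal.toReal_ofReal (by
      have hC0 : (0:ℝ) < C := lt_of_lt_of_le one_pos hC1
      have : (0:ℝ) ≤ 2 * C := by linarith
      exact mul_nonneg (mul_nonneg this (by positivity)) hε.le)] at h
  -- final contradiction
  have hFr : 0 < (F (Set.Ioi z)).toReal := tail_pos F γ hlim z
  have hGrF : (mconv F F (Set.Ioi z)).toReal ≤ C * (F (Set.Ioi z)).toReal := hOSz.1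
  have hGr0 : 0 ≤ (mconv F F (Set.Ioi z)).toReal := ENNReal.toReal_nonneg
  have hE1 : 0 < Real.exp (γ * T) := Real.exp_pos _
  have hC0 : (0:ℝ) < C := lt_of_lt_of_le one_pos hC1
  rw [← hprdef] at h
  set Gr := (mconv F F (Set.Ioi z)).toReal with hGrdef
  set Fr := (F (Set.Ioi z)).toReal with hFrdef
  have s1 : (δ₁ / 2) * Real.exp (γ * T) * (Fr * pr)
      ≤ 2 * ε * Real.exp (γ * T) * Gr
        + 2 * C * (Real.exp (γ * T) * Real.exp (γ * T)) * ε * Fr := by linarith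
  have s2 : 2 * ε * Real.exp (γ * T) * Gr ≤ 2 * ε * Real.exp (γ * T) * (C * Fr) := by
    have hpos : (0:ℝ) ≤ 2 * ε * Real.exp (γ * T) := by positivity
    exact mul_le_mul_of_nonneg_left hGrF hpos
  have s3 : (δ₁ / 2) * Real.exp (γ * T) * (Fr * pr)
      ≤ 2 * ε * C * (1 + Real.exp (γ * T)) * Real.exp (γ * T) * Fr := by
    have e : 2 * ε * Real.exp (γ * T) * (C * Fr)
        + 2 * C * (Real.exp (γ * T) * Real.exp (γ * T)) * ε * Fr
        = 2 * ε * C * (1 + Real.exp (γ * T)) * Real.exp (γ * T) * Fr := by ring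
    linarith
  have s4 : (δ₁ / 2) * pr ≤ 2 * ε * C * (1 + Real.exp (γ * T)) := by
    by_contra hcon4
    push_neg at hcon4
    have hEF : 0 < Real.exp (γ * T) * Fr := mul_pos hE1 hFr
    have hmul := mul_lt_mul_of_pos_right hcon4 hEF
    have e2 : (δ₁ / 2) * pr * (Real.exp (γ * T) * Fr)
        = (δ₁ / 2) * Real.exp (γ * T) * (Fr * pr) := by ring
    have e3 : 2 * ε * C * (1 + Real.exp (γ * T)) * (Real.exp (γ * T) * Fr)
        = 2 * ε * C * (1 + Real.exp (γ * T)) * Real.exp (γ * T) * Fr := by ring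
    linarith
  have s5 : ε * (8 * C * (1 + Real.exp (γ * T))) ≤ δ₁ * pr := by
    have hden : 0 < 8 * C * (1 + Real.exp (γ * T)) := by positivity
    calc ε * (8 * C * (1 + Real.exp (γ * T)))
        ≤ (δ₁ * pr / (8 * C * (1 + Real.exp (γ * T)))) * (8 * C * (1 + Real.exp (γ * T))) :=
          mul_le_mul_of_nonneg_right hεle hden.le
      _ = δ₁ * pr := by field_simp
  have hmp : 0 < δ₁ * pr := mul_pos hδ₁ hpr
  linarith [s4, s5]



end Fmain

theorem stmt6 (F : Measure ℝ) [IsProbabilityMeasure F] (hs : F (Set.Iio 0) = 0)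
    (γ : ℝ) (hγ : 0 ≤ γ) (hOS : MemOS F) (hL2 : MemL γ (mconv F F))
    (hlim : ∀ t > (0 : ℝ),
      Real.exp (γ * t) ≤ Filter.liminf (fun x => tail F (x - t) / tail F x) Filter.atTop) :
    MemL γ F := by
  have key : ∀ u : ℝ, 0 < u → Filter.Tendsto (fun x => tail F (x - u) / tail F x) Filter.atTop
      (nhds (Real.exp (γ * u))) := by
    intro u hu
    rw [Metric.tendsto_nhds]
    intro δ hδ
    have hup := main_upper F γ hγ hlim hOS hL2 hs u hu (δ/2) (by linarith)
    have hlo : ∀ᶠ x in atTop, Real.exp (γ*u) - δ/2 < tail F (x-u) / tail F x := by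
      refine Filter.eventually_lt_of_lt_liminf ?_ ?_
      · exact lt_of_lt_of_le (by linarith) (hlim u hu)
      · exact Filter.isBoundedUnder_of
          ⟨0, fun x => div_nonneg ENNReal.toReal_nonneg ENNReal.toReal_nonneg⟩
    filter_upwards [hup, hlo] with x h1 h2
    rw [Real.dist_eq, abs_lt]
    have hp := tail_pos F γ hlim x
    constructor
    · linarith
    · have h3 : tail F (x-u) / tail F x ≤ Real.exp (γ*u) + δ/2 := by
        rw [div_le_iff₀ hp]
        linarith [h1]
      linarith
  intro t
  rcases lt_trichotomy t 0 with htneg | rfl | htpos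
  · have hposs : (0:ℝ) < -t := by linarith
    have h1 : Filter.Tendsto (fun x : ℝ => x + -t) atTop atTop :=
      tendsto_atTop_add_const_right atTop (-t) tendsto_id
    have h2 := (key (-t) hposs).comp h1
    have h4 : Filter.Tendsto (fun x => tail F x / tail F (x - t)) atTop
        (nhds (Real.exp (γ * -t))) := by
      refine h2.congr (fun x => ?_)
      simp only [Function.comp_apply]
      have e1 : x + -t - -t = x := by ring
      have e2 : x + -t = x - t := by ring
      rw [e1, e2]
    have h5 := h4.inv₀ (Real.exp_ne_zero _)
    have h6 : (fun x => (tail F x / tail F (x - t))⁻¹) = fun x => tail F (x - t) / tail F x := by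
      funext x
      rw [inv_div]
    rw [h6] at h5
    have h7 : (Real.exp (γ * -t))⁻¹ = Real.exp (γ * t) := by
      rw [← Real.exp_neg]
      congr 1
      ring
    rwa [h7] at h5
  · have heq : (fun x => tail F (x - 0) / tail F x) = fun _ => (1:ℝ) := by
      funext x
      rw [sub_zero, div_self (ne_of_gt (tail_pos F γ hlim x))]
    rw [heq, mul_zero, Real.exp_zero]
    exact tendsto_const_nhds
  · exact key t htpos
end
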